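/- arXiv:1807.11729 — 8 statements merged into one kernel-verified Lean document; each statement's English description precedes it below -/
import Mathlib

section
/- For the Labouchère system with any nonempty initial list of positive reals and winning probability p = 1/2, the largest betting size has infinite expectation: E[B*] = ∞. -/
open MeasureTheory ProbabilityTheory ENNReal

/-- The Labouchère bet for a current list: the sum of the first and last entries if the
list has at least two entries, the single entry if the list is a singleton, and `0` for
the empty list. -/
noncomputable def labBet (L : List ℝ) : ℝ :=
  if L.length = 1 then L.headI else L.headI + L.getLastD 0

/-- One step of the Labouchère evolution: after a win the first and last entries are
removed (the single entry if the list is a singleton); after a loss the amount just lost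
is appended as a new last entry.  The empty list stays empty. -/
noncomputable def labStep (L : List ℝ) (win : Bool) : List ℝ :=
  if L = [] then [] else if win then L.tail.dropLast else L ++ [labBet L]

/-- The Labouchère evolution from the initial list `L₀` driven by the outcome sequence
`w` (`w n = true` means a win at coup `n`, for `n ≥ 1`): `labList L₀ w n` is the list
after the `n`-th coup, so the bet at coup `n + 1` is `labBet (labList L₀ w n)`. -/
noncomputable def labList (L₀ : List ℝ) (w : ℕ → Bool) : ℕ → List ℝ
  | 0 => L₀
  | n + 1 => labStep (labList L₀ w n) (w (n + 1))

namespace Lab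

noncomputable def run (L₀ : List ℝ) : List Bool → List ℝ
  | [] => L₀
  | b :: u => labStep (run L₀ u) b

def history (w : ℕ → Bool) : ℕ → List Bool
  | 0 => []
  | n + 1 => w (n + 1) :: history w n

lemma labList_eq_run (L₀ : List ℝ) (w : ℕ → Bool) (n : ℕ) :
    labList L₀ w n = run L₀ (history w n) := by
  induction n with
  | zero => rfl
  | succ n ih => simp [labList, history, run, ih]

section Det

variable {L : List ℝ}

lemma getLastD_cons_eq (b : ℝ) (M : List ℝ) :
    (b :: M).getLastD 0 = (b :: M).getLast (by simp) := by
  rw [List.getLastD_eq_getLast?, List.getLast?_eq_getLast (l := b :: M) (by simp)]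
  rfl

lemma labBet_cons_cons (a b : ℝ) (M : List ℝ) :
    labBet (a :: b :: M) = a + (b :: M).getLast (by simp) := by
  have h : (a :: b :: M).length ≠ 1 := by simp
  simp only [labBet, if_neg h, List.headI]
  rw [show (a :: b :: M).getLastD 0 = (b :: M).getLastD 0 from rfl, getLastD_cons_eq]

lemma labBet_singleton (a : ℝ) : labBet [a] = a := by simp [labBet]

lemma labBet_nil : labBet ([] : List ℝ) = 0 := by
  simp [labBet]
  rfl

lemma labBet_pos (hne : L ≠ []) (hpos : ∀ x ∈ L, 0 < x) : 0 < labBet L := by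
  cases L with
  | nil => exact absurd rfl hne
  | cons a M =>
    cases M with
    | nil => simpa [labBet_singleton] using hpos a (by simp)
    | cons b M' =>
      rw [labBet_cons_cons]
      have h1 : 0 < a := hpos a (by simp)
      have h2 : 0 < (b :: M').getLast (by simp) :=
        hpos _ (List.mem_cons_of_mem a (List.getLast_mem _))
      linarith

lemma labBet_nonneg (hpos : ∀ x ∈ L, 0 < x) : 0 ≤ labBet L := by
  rcases eq_or_ne L ([]) with rfl | h
  · simp [labBet_nil]
  · exact le_of_lt (labBet_pos h hpos)

lemma sum_nonneg_of_pos (hpos : ∀ x ∈ L, 0 < x) : 0 ≤ L.sum :=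
  List.sum_nonneg (fun x hx => le_of_lt (hpos x hx))

lemma labBet_le_sum (hpos : ∀ x ∈ L, 0 < x) : labBet L ≤ L.sum := by
  cases L with
  | nil => simp [labBet_nil]
  | cons a M =>
    cases M with
    | nil => simp [labBet_singleton]
    | cons b M' =>
      rw [labBet_cons_cons]
      have h2 : (b :: M').getLast (by simp) ≤ (b :: M').sum :=
        List.single_le_sum (fun x hx => le_of_lt (hpos x (List.mem_cons_of_mem a hx))) _
          (List.getLast_mem _)
      simp only [List.sum_cons] at h2 ⊢
      linarith

lemma sum_labStep_true (hne : L ≠ []) : (labStep L true).sum = L.sum - labBet L := by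
  cases L with
  | nil => exact absurd rfl hne
  | cons a M =>
    cases M with
    | nil => simp [labStep, labBet_singleton]
    | cons b M' =>
      have h : (a :: b :: M' : List ℝ) ≠ [] := by simp
      simp only [labStep, if_neg h, if_true, List.tail_cons]
      rw [labBet_cons_cons]
      have hd := List.dropLast_append_getLast (l := b :: M') (by simp)
      have hsum : (b :: M').dropLast.sum + (b :: M').getLast (by simp) = (b :: M').sum := by
        conv_rhs => rw [← hd]
        simp
      simp only [List.sum_cons] at hsum ⊢
      linarith

lemma sum_labStep_false (hne : L ≠ []) : (labStep L false).sum = L.sum + labBet L := by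
  simp [labStep, if_neg hne]

lemma labStep_nil (b : Bool) : labStep [] b = [] := by simp [labStep]

lemma pos_labStep (hpos : ∀ x ∈ L, 0 < x) (b : Bool) : ∀ x ∈ labStep L b, 0 < x := by
  rcases eq_or_ne L ([]) with rfl | hne
  · simp [labStep_nil]
  · cases b with
    | true =>
        intro x hx
        simp only [labStep, if_neg hne, if_true] at hx
        exact hpos x (List.mem_of_mem_tail (List.mem_of_mem_dropLast hx))
    | false =>
        intro x hx
        simp only [labStep, if_neg hne, Bool.false_eq_true, if_false,
          List.mem_append, List.mem_singleton] at hx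
        rcases hx with hx | rfl
        · exact hpos x hx
        · exact labBet_pos hne hpos

lemma pos_run (L₀ : List ℝ) (hpos : ∀ x ∈ L₀, 0 < x) (u : List Bool) :
    ∀ x ∈ run L₀ u, 0 < x := by
  induction u with
  | nil => exact hpos
  | cons b u ih => exact pos_labStep ih b

lemma sum_labStep_le (hpos : ∀ x ∈ L, 0 < x) (b : Bool) :
    (labStep L b).sum ≤ 2 * L.sum := by
  rcases eq_or_ne L ([]) with rfl | hne
  · simp [labStep_nil]
  · have h1 := labBet_le_sum hpos
    have h2 := labBet_nonneg hpos
    have h3 := sum_nonneg_of_pos hpos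
    cases b with
    | true => rw [sum_labStep_true hne]; linarith
    | false => rw [sum_labStep_false hne]; linarith

lemma sum_labStep_add (L : List ℝ) :
    (labStep L true).sum + (labStep L false).sum = 2 * L.sum := by
  rcases eq_or_ne L ([]) with rfl | hne
  · simp [labStep_nil]
  · rw [sum_labStep_true hne, sum_labStep_false hne]; ring

lemma length_labStep_true (hne : L ≠ []) :
    (labStep L true).length = L.length - 2 := by
  simp [labStep, if_neg hne]
  omega

lemma length_labStep_false (hne : L ≠ []) :
    (labStep L false).length = L.length + 1 := by
  simp [labStep, if_neg hne]


end Det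

section Bound

variable (L₀ : List ℝ)

/-- max of all bets made at or before the position `u` (including the bet based on `run u`). -/
noncomputable def betSup : List Bool → ℝ
  | [] => labBet L₀
  | b :: u => max (betSup u) (labBet (run L₀ (b :: u)))

lemma betSup_le_of_cons (b : Bool) (u : List Bool) : betSup L₀ u ≤ betSup L₀ (b :: u) :=
  le_max_left _ _

lemma labBet_le_betSup (u : List Bool) : labBet (run L₀ u) ≤ betSup L₀ u := by
  cases u with
  | nil => exact le_refl _
  | cons b u => exact le_max_right _ _

variable (hpos : ∀ x ∈ L₀, 0 < x)
include hpos

lemma mem_run_le (u : List Bool) :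
    ∀ x ∈ run L₀ u, x ≤ max L₀.sum (betSup L₀ u) := by
  induction u with
  | nil =>
      intro x hx
      exact le_max_of_le_left (List.single_le_sum (fun y hy => (hpos y hy).le) x hx)
  | cons b u ih =>
      intro x hx
      rcases eq_or_ne (run L₀ u) ([]) with hr | hr
      · rw [run, hr, labStep_nil] at hx; simp at hx
      · rw [run] at hx
        cases b with
        | true =>
            simp only [labStep, if_neg hr, if_true] at hx
            exact le_trans (ih x (List.mem_of_mem_tail (List.mem_of_mem_dropLast hx)))
              (max_le_max (le_refl _) (betSup_le_of_cons L₀ true u))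
        | false =>
            simp only [labStep, if_neg hr, Bool.false_eq_true, if_false,
              List.mem_append, List.mem_singleton] at hx
            rcases hx with hx | rfl
            · exact le_trans (ih x hx) (max_le_max (le_refl _) (betSup_le_of_cons L₀ false u))
            · exact le_max_of_le_right (le_trans (labBet_le_betSup L₀ u)
                (betSup_le_of_cons L₀ false u))

lemma sum_run_le (u : List Bool) :
    (run L₀ u).sum ≤ (run L₀ u).length * (L₀.sum + betSup L₀ u) := by
  have hb : 0 ≤ betSup L₀ u := by
    induction u with
    | nil => exact labBet_nonneg hpos
    | cons b u ih => exact le_trans ih (betSup_le_of_cons L₀ b u)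
  have hs : 0 ≤ L₀.sum := sum_nonneg_of_pos hpos
  have h1 : ∀ x ∈ run L₀ u, x ≤ L₀.sum + betSup L₀ u := fun x hx =>
    le_trans (mem_run_le L₀ hpos u x hx) (max_le (by linarith) (by linarith))
  have := List.sum_le_card_nsmul (run L₀ u) _ h1
  simpa [nsmul_eq_mul, mul_add] using this

end Bound

section Potentials

/-- supermartingale potential for the length process, `ρ = 3/2`. -/
noncomputable def gpot (l : ℕ) : ℝ :=
  if l = 0 then 0 else if l = 1 then 3/2 else (3/2 : ℝ) ^ l

/-- linear-drift potential for absorption. -/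
noncomputable def fpot (l : ℕ) : ℝ :=
  if l = 0 then 0 else if l = 1 then 4/3 else (l : ℝ)

lemma gpot_nonneg (l : ℕ) : 0 ≤ gpot l := by
  unfold gpot; split_ifs <;> positivity

lemma fpot_nonneg (l : ℕ) : 0 ≤ fpot l := by
  unfold fpot; split_ifs <;> positivity

lemma gpot_le_rpow (l : ℕ) : gpot l ≤ (3/2 : ℝ) ^ l := by
  unfold gpot; split_ifs with h1 h2
  · positivity
  · subst h2; norm_num
  · exact le_refl _

lemma rpow_le_gpot {l lam : ℕ} (h2 : 2 ≤ lam) (h : lam ≤ l) : (3/2 : ℝ) ^ lam ≤ gpot l := by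
  have hl1 : l ≠ 0 := by omega
  have hl2 : l ≠ 1 := by omega
  unfold gpot
  rw [if_neg hl1, if_neg hl2]
  exact pow_le_pow_right₀ (by norm_num) h

lemma gpot_ineq (l : ℕ) (hl : 1 ≤ l) : gpot (l - 2) + gpot (l + 1) ≤ 2 * gpot l := by
  rcases Nat.lt_or_ge l 4 with h4 | h4
  · interval_cases l <;> norm_num [gpot]
  · obtain ⟨m, rfl⟩ : ∃ m, l = m + 4 := ⟨l - 4, by omega⟩
    have e1 : m + 4 - 2 = m + 2 := by omega
    rw [e1]
    unfold gpot
    rw [if_neg (by omega), if_neg (by omega), if_neg (by omega), if_neg (by omega),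
      if_neg (by omega), if_neg (by omega)]
    have hp : (0:ℝ) < (3/2 : ℝ) ^ m := by positivity
    rw [show m + 2 = m + 2 from rfl, pow_add, pow_add, pow_add]
    nlinarith [hp]

lemma fpot_ineq (l : ℕ) (hl : 1 ≤ l) : fpot (l - 2) + fpot (l + 1) ≤ 2 * fpot l - 2/3 := by
  rcases Nat.lt_or_ge l 4 with h4 | h4
  · interval_cases l <;> norm_num [fpot]
  · obtain ⟨m, rfl⟩ : ∃ m, l = m + 4 := ⟨l - 4, by omega⟩
    have e1 : m + 4 - 2 = m + 2 := by omega
    rw [e1]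
    unfold fpot
    rw [if_neg (by omega), if_neg (by omega), if_neg (by omega), if_neg (by omega),
      if_neg (by omega), if_neg (by omega)]
    push_cast
    linarith

lemma gpot_step {L : List ℝ} (hne : L ≠ []) :
    gpot (labStep L true).length + gpot (labStep L false).length ≤ 2 * gpot L.length := by
  rw [length_labStep_true hne, length_labStep_false hne]
  exact gpot_ineq L.length (List.length_pos_iff.2 hne)

lemma fpot_step {L : List ℝ} (hne : L ≠ []) :
    fpot (labStep L true).length + fpot (labStep L false).length ≤
      2 * fpot L.length - 2/3 := by
  rw [length_labStep_true hne, length_labStep_false hne]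
  exact fpot_ineq L.length (List.length_pos_iff.2 hne)

end Potentials

section Avg

/-- uniform average of `F` over words of length `n` (innermost coin = head). -/
noncomputable def avg : ℕ → (List Bool → ℝ) → ℝ
  | 0, F => F []
  | n + 1, F => avg n (fun u => (F (true :: u) + F (false :: u)) / 2)

lemma avg_mono {F G : List Bool → ℝ} (h : ∀ u, F u ≤ G u) :
    ∀ n, avg n F ≤ avg n G := by
  intro n
  induction n generalizing F G with
  | zero => exact h []
  | succ n ih =>
      exact ih (fun u => by
        have h1 := h (true :: u); have h2 := h (false :: u)
        show (F (true :: u) + F (false :: u)) / 2 ≤ (G (true :: u) + G (false :: u)) / 2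
        linarith)

lemma avg_add (F G : List Bool → ℝ) : ∀ n, avg n (fun u => F u + G u) = avg n F + avg n G := by
  intro n
  induction n generalizing F G with
  | zero => rfl
  | succ n ih =>
      show avg n _ = _
      rw [show (fun u => (F (true :: u) + G (true :: u) + (F (false :: u) + G (false :: u))) / 2)
          = (fun u => (F (true :: u) + F (false :: u)) / 2 +
              (G (true :: u) + G (false :: u)) / 2) from funext fun u => by ring]
      exact ih _ _

lemma avg_smul (c : ℝ) (F : List Bool → ℝ) :
    ∀ n, avg n (fun u => c * F u) = c * avg n F := by
  intro n
  induction n generalizing F with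
  | zero => rfl
  | succ n ih =>
      show avg n _ = _
      rw [show (fun u => (c * F (true :: u) + c * F (false :: u)) / 2)
          = (fun u => c * ((F (true :: u) + F (false :: u)) / 2)) from funext fun u => by ring]
      exact ih _

lemma avg_const (c : ℝ) : ∀ n, avg n (fun _ => c) = c := by
  intro n
  induction n with
  | zero => rfl
  | succ n ih =>
      show avg n _ = _
      rw [show (fun (_ : List Bool) => (c + c) / 2) = (fun _ => c) from funext fun u => by ring]
      exact ih

lemma avg_nonneg {F : List Bool → ℝ} (h : ∀ u, 0 ≤ F u) (n : ℕ) : 0 ≤ avg n F := by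
  have := avg_mono (F := fun _ => 0) (G := F) h n
  rwa [avg_const] at this

/-- If `F` is a (pointwise) super-step function then its averages decrease. -/
lemma avg_superstep {F : List Bool → ℝ}
    (h : ∀ u, (F (true :: u) + F (false :: u)) / 2 ≤ F u) (n : ℕ) :
    avg n F ≤ F [] := by
  induction n with
  | zero => exact le_refl _
  | succ n ih => exact le_trans (avg_mono h n) ih

open Classical in
/-- real indicator of a predicate on words. -/
noncomputable def indP (p : List Bool → Prop) : List Bool → ℝ := fun u => if p u then 1 else 0

lemma indP_nonneg (p : List Bool → Prop) (u : List Bool) : 0 ≤ indP p u := by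
  unfold indP; split_ifs <;> norm_num

lemma indP_le_one (p : List Bool → Prop) (u : List Bool) : indP p u ≤ 1 := by
  unfold indP; split_ifs <;> norm_num

lemma indP_mono {p q : List Bool → Prop} (h : ∀ u, p u → q u) (u : List Bool) :
    indP p u ≤ indP q u := by
  classical
  by_cases h1 : p u
  · have h2 : q u := h u h1
    simp [indP, if_pos h1, if_pos h2]
  · simp only [indP, if_neg h1]
    split_ifs <;> norm_num

lemma avg_indP_nonneg (p : List Bool → Prop) (n : ℕ) : 0 ≤ avg n (indP p) :=
  avg_nonneg (indP_nonneg p) n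

lemma avg_indP_le_one (p : List Bool → Prop) (n : ℕ) : avg n (indP p) ≤ 1 := by
  have := avg_mono (indP_le_one p) n
  rwa [avg_const] at this

end Avg

section StopS

variable (L₀ : List ℝ) (y : ℝ)

def hitS : List Bool → Prop
  | [] => y ≤ L₀.sum
  | b :: u => hitS u ∨ y ≤ (run L₀ (b :: u)).sum

noncomputable instance hitS.decPred : DecidablePred (hitS L₀ y) := fun _ => Classical.dec _

noncomputable def stopS : List Bool → ℝ
  | [] => L₀.sum
  | b :: u => if hitS L₀ y u then stopS u else (run L₀ (b :: u)).sum

variable {L₀ y}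

lemma stopS_cons (b : Bool) (u : List Bool) :
    stopS L₀ y (b :: u) =
      if hitS L₀ y u then stopS L₀ y u else (run L₀ (b :: u)).sum := rfl

lemma hitS_cons_of (b : Bool) {u : List Bool} (h : hitS L₀ y u) : hitS L₀ y (b :: u) :=
  Or.inl h

lemma not_hit_sum_lt {u : List Bool} (h : ¬ hitS L₀ y u) : (run L₀ u).sum < y := by
  cases u with
  | nil => simpa [hitS, run] using lt_of_not_ge fun hle => h hle
  | cons b u =>
      by_contra hc
      exact h (Or.inr (le_of_not_gt hc))

lemma stopS_of_not_hit {u : List Bool} (h : ¬ hitS L₀ y u) :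
    stopS L₀ y u = (run L₀ u).sum := by
  cases u with
  | nil => rfl
  | cons b u =>
      have hu : ¬ hitS L₀ y u := fun hu => h (Or.inl hu)
      rw [stopS_cons, if_neg hu]

lemma stopS_avg_step (u : List Bool) :
    (stopS L₀ y (true :: u) + stopS L₀ y (false :: u)) / 2 = stopS L₀ y u := by
  by_cases h : hitS L₀ y u
  · rw [stopS_cons, stopS_cons, if_pos h, if_pos h]; ring
  · rw [stopS_cons, stopS_cons, if_neg h, if_neg h, stopS_of_not_hit h]
    show ((labStep (run L₀ u) true).sum + (labStep (run L₀ u) false).sum) / 2 = _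
    rw [sum_labStep_add]
    ring

lemma avg_stopS (n : ℕ) : avg n (stopS L₀ y) = L₀.sum := by
  induction n with
  | zero => rfl
  | succ n ih =>
      show avg n _ = _
      rw [show (fun u => (stopS L₀ y (true :: u) + stopS L₀ y (false :: u)) / 2)
          = stopS L₀ y from funext stopS_avg_step]
      exact ih

variable (hpos : ∀ x ∈ L₀, 0 < x)
include hpos

lemma stopS_nonneg (u : List Bool) : 0 ≤ stopS L₀ y u := by
  induction u with
  | nil => exact sum_nonneg_of_pos hpos
  | cons b u ih =>
      rw [stopS_cons]
      split_ifs
      · exact ih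
      · exact sum_nonneg_of_pos (pos_run L₀ hpos (b :: u))

lemma stopS_le (hy : L₀.sum < y) (u : List Bool) : stopS L₀ y u ≤ 2 * y := by
  have hy0 : 0 < y := lt_of_le_of_lt (sum_nonneg_of_pos hpos) hy
  induction u with
  | nil => show L₀.sum ≤ 2 * y; linarith
  | cons b u ih =>
      rw [stopS_cons]
      split_ifs with h
      · exact ih
      · show (run L₀ (b :: u)).sum ≤ 2 * y
        have h1 : (run L₀ (b :: u)).sum ≤ 2 * (run L₀ u).sum :=
          sum_labStep_le (pos_run L₀ hpos u) b
        have h2 := not_hit_sum_lt h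
        linarith

omit hpos in
lemma hit_le_stopS {u : List Bool} (h : hitS L₀ y u) : y ≤ stopS L₀ y u := by
  induction u with
  | nil => exact h
  | cons b u ih =>
      rw [stopS_cons]
      split_ifs with h1
      · exact ih h1
      · rcases h with h | h
        · exact absurd h h1
        · exact h

/-- lower bound on hitting probability. -/
lemma hitS_prob_lower (hy : L₀.sum < y) (n : ℕ) :
    L₀.sum ≤ 2 * y * avg n (indP (hitS L₀ y)) + y * avg n (indP (fun u => run L₀ u ≠ [])) := by
  have hy0 : 0 < y := lt_of_le_of_lt (sum_nonneg_of_pos hpos) hy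
  have key : ∀ u, stopS L₀ y u ≤
      2 * y * indP (hitS L₀ y) u + y * indP (fun u => run L₀ u ≠ []) u := by
    intro u
    have i1 := indP_nonneg (hitS L₀ y) u
    have i2 := indP_nonneg (fun u => run L₀ u ≠ []) u
    by_cases h : hitS L₀ y u
    · have : indP (hitS L₀ y) u = 1 := by simp [indP, if_pos h]
      rw [this]
      have := stopS_le hpos hy u
      nlinarith
    · have e1 : indP (hitS L₀ y) u = 0 := by simp [indP, if_neg h]
      rw [e1, stopS_of_not_hit h]
      by_cases ha : run L₀ u ≠ []
      · have : indP (fun u => run L₀ u ≠ []) u = 1 := by simp [indP, if_pos ha]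
        rw [this]
        have := not_hit_sum_lt h
        nlinarith
      · have e2 : indP (fun u => run L₀ u ≠ []) u = 0 := by simp [indP, if_neg ha]
        rw [e2]
        push_neg at ha
        simp [ha]
  have h1 := avg_mono key n
  rw [avg_stopS] at h1
  calc L₀.sum ≤ avg n (fun u =>
        2 * y * indP (hitS L₀ y) u + y * indP (fun u => run L₀ u ≠ []) u) := h1
    _ = 2 * y * avg n (indP (hitS L₀ y)) + y * avg n (indP (fun u => run L₀ u ≠ [])) := by
        rw [avg_add, avg_smul, avg_smul]

/-- upper bound on hitting probability (Doob). -/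
lemma hitS_prob_upper (hy0 : 0 < y) (n : ℕ) :
    y * avg n (indP (hitS L₀ y)) ≤ L₀.sum := by
  have key : ∀ u, y * indP (hitS L₀ y) u ≤ stopS L₀ y u := by
    intro u
    by_cases h : hitS L₀ y u
    · have : indP (hitS L₀ y) u = 1 := by simp [indP, if_pos h]
      rw [this, mul_one]
      exact hit_le_stopS h
    · have : indP (hitS L₀ y) u = 0 := by simp [indP, if_neg h]
      rw [this, mul_zero]
      exact stopS_nonneg hpos u
  have h1 := avg_mono key n
  rw [avg_stopS, avg_smul] at h1
  exact h1

end StopS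

section StopG

variable (L₀ : List ℝ) (lam : ℕ)

def hitL : List Bool → Prop
  | [] => lam ≤ L₀.length
  | b :: u => hitL u ∨ lam ≤ (run L₀ (b :: u)).length

noncomputable instance hitL.decPred : DecidablePred (hitL L₀ lam) := fun _ => Classical.dec _

noncomputable def stopG : List Bool → ℝ
  | [] => gpot L₀.length
  | b :: u => if hitL L₀ lam u then stopG u else gpot (run L₀ (b :: u)).length

variable {L₀ lam}

lemma stopG_cons (b : Bool) (u : List Bool) :
    stopG L₀ lam (b :: u) =
      if hitL L₀ lam u then stopG L₀ lam u else gpot (run L₀ (b :: u)).length := rfl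

lemma stopG_of_not_hit {u : List Bool} (h : ¬ hitL L₀ lam u) :
    stopG L₀ lam u = gpot (run L₀ u).length := by
  cases u with
  | nil => rfl
  | cons b u =>
      have hu : ¬ hitL L₀ lam u := fun hu => h (Or.inl hu)
      rw [stopG_cons, if_neg hu]

lemma stopG_avg_step (u : List Bool) :
    (stopG L₀ lam (true :: u) + stopG L₀ lam (false :: u)) / 2 ≤ stopG L₀ lam u := by
  by_cases h : hitL L₀ lam u
  · rw [stopG_cons, stopG_cons, if_pos h, if_pos h]; simp
  · rw [stopG_cons, stopG_cons, if_neg h, if_neg h, stopG_of_not_hit h]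
    rcases eq_or_ne (run L₀ u) ([]) with hr | hr
    · show (gpot (labStep (run L₀ u) true).length + gpot (labStep (run L₀ u) false).length) / 2
        ≤ gpot (run L₀ u).length
      rw [hr]
      simp [labStep_nil, gpot]
    · have := gpot_step hr
      show (gpot (labStep (run L₀ u) true).length + gpot (labStep (run L₀ u) false).length) / 2
        ≤ gpot (run L₀ u).length
      linarith

lemma avg_stopG (n : ℕ) : avg n (stopG L₀ lam) ≤ gpot L₀.length :=
  avg_superstep stopG_avg_step n

lemma stopG_nonneg (u : List Bool) : 0 ≤ stopG L₀ lam u := by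
  induction u with
  | nil => exact gpot_nonneg _
  | cons b u ih =>
      rw [stopG_cons]
      split_ifs
      · exact ih
      · exact gpot_nonneg _

lemma hit_le_stopG (h2 : 2 ≤ lam) {u : List Bool} (h : hitL L₀ lam u) :
    (3/2 : ℝ) ^ lam ≤ stopG L₀ lam u := by
  induction u with
  | nil => exact rpow_le_gpot h2 h
  | cons b u ih =>
      rw [stopG_cons]
      split_ifs with h1
      · exact ih h1
      · rcases h with h | h
        · exact absurd h h1
        · exact rpow_le_gpot h2 h

lemma hitL_prob_upper (h2 : 2 ≤ lam) (n : ℕ) :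
    (3/2 : ℝ) ^ lam * avg n (indP (hitL L₀ lam)) ≤ (3/2 : ℝ) ^ L₀.length := by
  have key : ∀ u, (3/2 : ℝ) ^ lam * indP (hitL L₀ lam) u ≤ stopG L₀ lam u := by
    intro u
    by_cases h : hitL L₀ lam u
    · have : indP (hitL L₀ lam) u = 1 := by simp [indP, if_pos h]
      rw [this, mul_one]
      exact hit_le_stopG h2 h
    · have : indP (hitL L₀ lam) u = 0 := by simp [indP, if_neg h]
      rw [this, mul_zero]
      exact stopG_nonneg u
  have h1 := avg_mono key n
  rw [avg_smul] at h1
  exact le_trans h1 (le_trans (avg_stopG n) (gpot_le_rpow _))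

end StopG

section Alive

variable {L₀ : List ℝ}

lemma alive_of_cons {b : Bool} {u : List Bool} (h : run L₀ (b :: u) ≠ []) :
    run L₀ u ≠ [] := by
  intro hc
  apply h
  show labStep (run L₀ u) b = []
  rw [hc, labStep_nil]

lemma fpot_run_step (u : List Bool) :
    (fpot (run L₀ (true :: u)).length + fpot (run L₀ (false :: u)).length) / 2
      + (1/3) * indP (fun u => run L₀ u ≠ []) u ≤ fpot (run L₀ u).length := by
  by_cases h : run L₀ u ≠ []
  · have hstep := fpot_step h
    have : indP (fun u => run L₀ u ≠ []) u = 1 := by simp [indP, if_pos h]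
    rw [this]
    show (fpot (labStep (run L₀ u) true).length + fpot (labStep (run L₀ u) false).length) / 2
      + _ ≤ _
    linarith
  · have e : indP (fun u => run L₀ u ≠ []) u = 0 := by simp [indP, if_neg h]
    rw [e]
    push_neg at h
    show (fpot (labStep (run L₀ u) true).length + fpot (labStep (run L₀ u) false).length) / 2
      + _ ≤ _
    rw [h, labStep_nil, labStep_nil]
    simp [fpot]

lemma avg_fpot_alive (n : ℕ) :
    avg n (fun u => fpot (run L₀ u).length)
      + (1/3) * ∑ k ∈ Finset.range n, avg k (indP (fun u => run L₀ u ≠ []))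
      ≤ fpot L₀.length := by
  induction n with
  | zero => simp [avg, run]
  | succ n ih =>
      have step : avg (n + 1) (fun u => fpot (run L₀ u).length)
          + (1/3) * avg n (indP (fun u => run L₀ u ≠ []))
          ≤ avg n (fun u => fpot (run L₀ u).length) := by
        have h1 : ∀ u, (fpot (run L₀ (true :: u)).length + fpot (run L₀ (false :: u)).length) / 2
            + (1/3) * indP (fun u => run L₀ u ≠ []) u ≤ fpot (run L₀ u).length :=
          fpot_run_step
        have h2 := avg_mono h1 n
        rw [avg_add, avg_smul] at h2
        exact h2
      rw [Finset.sum_range_succ]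
      have := ih
      linarith

lemma alive_antitone (n : ℕ) :
    avg (n + 1) (indP (fun u => run L₀ u ≠ [])) ≤ avg n (indP (fun u => run L₀ u ≠ [])) := by
  show avg n _ ≤ _
  apply avg_mono
  intro u
  have h1 := indP_mono (p := fun v => run L₀ (true :: v) ≠ []) (q := fun v => run L₀ v ≠ [])
      (fun v h => alive_of_cons h) u
  have h2 := indP_mono (p := fun v => run L₀ (false :: v) ≠ []) (q := fun v => run L₀ v ≠ [])
      (fun v h => alive_of_cons h) u
  have e1 : indP (fun v => run L₀ (true :: v) ≠ []) u = indP (fun v => run L₀ v ≠ []) (true :: u) := by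
    simp [indP]
  have e2 : indP (fun v => run L₀ (false :: v) ≠ []) u
      = indP (fun v => run L₀ v ≠ []) (false :: u) := by
    simp [indP]
  rw [e1] at h1
  rw [e2] at h2
  show (indP (fun v => run L₀ v ≠ []) (true :: u) + indP (fun v => run L₀ v ≠ []) (false :: u)) / 2
    ≤ indP (fun v => run L₀ v ≠ []) u
  linarith

lemma alive_prob_le (n : ℕ) :
    (n + 1 : ℝ) * avg n (indP (fun u => run L₀ u ≠ [])) ≤ 3 * fpot L₀.length := by
  have h1 : ∀ k ≤ n, avg n (indP (fun u => run L₀ u ≠ []))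
      ≤ avg k (indP (fun u => run L₀ u ≠ [])) := by
    intro k hk
    induction n with
    | zero => simp_all
    | succ m ihm =>
        rcases Nat.eq_or_lt_of_le hk with rfl | hlt
        · exact le_refl _
        · exact le_trans (alive_antitone m) (ihm (by omega))
  have h2 : (n + 1 : ℝ) * avg n (indP (fun u => run L₀ u ≠ []))
      ≤ ∑ k ∈ Finset.range (n + 1), avg k (indP (fun u => run L₀ u ≠ [])) := by
    have : ∀ k ∈ Finset.range (n + 1), avg n (indP (fun u => run L₀ u ≠ []))
        ≤ avg k (indP (fun u => run L₀ u ≠ [])) := fun k hk =>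
      h1 k (by simpa [Nat.lt_succ_iff] using hk)
    calc (n + 1 : ℝ) * avg n (indP (fun u => run L₀ u ≠ []))
        = ∑ _k ∈ Finset.range (n + 1), avg n (indP (fun u => run L₀ u ≠ [])) := by
          simp [Finset.sum_const, mul_comm]
      _ ≤ _ := Finset.sum_le_sum this
  have h3 := avg_fpot_alive (L₀ := L₀) (n + 1)
  have h4 : 0 ≤ avg (n + 1) (fun u => fpot (run L₀ u).length) :=
    avg_nonneg (fun u => fpot_nonneg _) _
  linarith

end Alive

section Words

def wordsL : ℕ → List (List Bool)
  | 0 => [[]]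
  | n + 1 => (wordsL n).flatMap (fun u => [true :: u, false :: u])

lemma mem_wordsL : ∀ {n : ℕ} {u : List Bool}, u ∈ wordsL n ↔ u.length = n := by
  intro n
  induction n with
  | zero => intro u; simp [wordsL, List.length_eq_zero_iff]
  | succ n ih =>
      intro u
      simp only [wordsL, List.mem_flatMap, List.mem_cons, List.mem_singleton]
      constructor
      · rintro ⟨v, hv, h⟩
        rcases h with rfl | (rfl | h)
        · simp [ih.mp hv]
        · simp [ih.mp hv]
        · simp at h
      · intro hl
        cases u with
        | nil => simp at hl
        | cons b v =>
            refine ⟨v, ih.mpr (by simpa using hl), ?_⟩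
            cases b
            · right; left; rfl
            · left; rfl

lemma wordsL_nodup (n : ℕ) : (wordsL n).Nodup := by
  induction n with
  | zero => simp [wordsL]
  | succ n ih =>
      rw [wordsL, List.nodup_flatMap]
      refine ⟨fun u _ => by simp, ?_⟩
      have : ∀ u v : List Bool, u ≠ v →
          (Function.onFun List.Disjoint fun u => [true :: u, false :: u]) u v := by
        intro u v huv
        intro a ha hb
        simp only [Function.onFun, List.mem_cons, List.mem_singleton] at ha hb
        rcases ha with rfl | (rfl | ha)
        · rcases hb with hb | (hb | hb)
          · exact huv (List.cons_eq_cons.mp hb).2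
          · exact Bool.noConfusion (List.cons_eq_cons.mp hb).1
          · simp at hb
        · rcases hb with hb | (hb | hb)
          · exact Bool.noConfusion (List.cons_eq_cons.mp hb).1
          · exact huv (List.cons_eq_cons.mp hb).2
          · simp at hb
        · simp at ha
      exact List.Pairwise.imp (fun h => this _ _ h) ih

lemma sum_map_flatMap' (l : List (List Bool)) (f : List Bool → List (List Bool))
    (F : List Bool → ℝ) :
    ((l.flatMap f).map F).sum = (l.map (fun u => ((f u).map F).sum)).sum := by
  induction l with
  | nil => rfl
  | cons a l ih => simp [List.flatMap_cons, ih]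

lemma avg_eq_sum (F : List Bool → ℝ) : ∀ n, avg n F = ((wordsL n).map F).sum / 2 ^ n := by
  intro n
  induction n generalizing F with
  | zero => simp [avg, wordsL]
  | succ n ih =>
      show avg n _ = _
      rw [ih]
      have h1 : ((wordsL (n+1)).map F).sum
          = ((wordsL n).map (fun u => F (true :: u) + F (false :: u))).sum := by
        rw [wordsL, sum_map_flatMap']
        congr 1
        apply List.map_congr_left
        intro u _
        simp
      have h2 : ((wordsL n).map (fun u => (F (true :: u) + F (false :: u)) / 2)).sum
          = (1/2) * ((wordsL n).map (fun u => F (true :: u) + F (false :: u))).sum := by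
        rw [← List.sum_map_mul_left]
        congr 1
        apply List.map_congr_left
        intro u _
        ring
      rw [h2, h1]
      ring

lemma history_length (w : ℕ → Bool) (n : ℕ) : (history w n).length = n := by
  induction n with
  | zero => rfl
  | succ n ih => simp [history, ih]

lemma avg_indP_eq_card (p : List Bool → Prop) [DecidablePred p] (n : ℕ) :
    avg n (indP p) = (((wordsL n).toFinset.filter p).card : ℝ) / 2 ^ n := by
  classical
  rw [avg_eq_sum]
  congr 1
  rw [← List.sum_toFinset _ (wordsL_nodup n), ← Finset.sum_boole (p := p)]
  apply Finset.sum_congr rfl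
  intro u _
  by_cases h : p u <;> simp [indP, h]

end Words

section Transfer

variable {Ω : Type} [MeasurableSpace Ω] (μ : Measure Ω) [IsProbabilityMeasure μ]
  (W : ℕ → Ω → Bool)

lemma measSet (hW : ∀ n, Measurable (W n)) :
    ∀ (n : ℕ) (p : List Bool → Prop), MeasurableSet {ω | p (history (fun k => W k ω) n)} := by
  intro n
  induction n with
  | zero =>
      intro p
      by_cases h : p []
      · have : {ω : Ω | p (history (fun k => W k ω) 0)} = Set.univ := by
          ext ω; simp [history, h]
        rw [this]; exact MeasurableSet.univ
      · have : {ω : Ω | p (history (fun k => W k ω) 0)} = ∅ := by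
          ext ω; simp [history, h]
        rw [this]; exact MeasurableSet.empty
  | succ n ih =>
      intro p
      have hset : {ω : Ω | p (history (fun k => W k ω) (n+1))}
          = ((W (n+1)) ⁻¹' {true} ∩ {ω | p (true :: history (fun k => W k ω) n)})
          ∪ ((W (n+1)) ⁻¹' {false} ∩ {ω | p (false :: history (fun k => W k ω) n)}) := by
        ext ω
        cases h : W (n+1) ω <;> simp [history, h]
      rw [hset]
      exact (((hW (n+1)) (measurableSet_singleton true)).inter (ih fun u => p (true :: u))).union
        (((hW (n+1)) (measurableSet_singleton false)).inter (ih fun u => p (false :: u)))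

lemma measFun (hW : ∀ n, Measurable (W n)) :
    ∀ (n : ℕ) (G : List Bool → ℝ), Measurable (fun ω => G (history (fun k => W k ω) n)) := by
  intro n
  induction n with
  | zero =>
      intro G
      have : (fun ω : Ω => G (history (fun k => W k ω) 0)) = fun _ => G [] := rfl
      rw [this]
      exact measurable_const
  | succ n ih =>
      intro G
      have hset : (fun ω => G (history (fun k => W k ω) (n+1)))
          = fun ω => if W (n+1) ω = true then G (true :: history (fun k => W k ω) n)
              else G (false :: history (fun k => W k ω) n) := by
        funext ω
        cases h : W (n+1) ω <;> simp [history, h]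
      rw [hset]
      exact Measurable.ite ((hW (n+1)) (measurableSet_singleton true))
        (ih fun u => G (true :: u)) (ih fun u => G (false :: u))

lemma hist_eq_iff (w : ℕ → Bool) :
    ∀ (n : ℕ) (u : List Bool), u.length = n →
      (history w n = u ↔ ∀ k ∈ Finset.Icc 1 n, w k = u.getD (n - k) false) := by
  intro n
  induction n with
  | zero =>
      intro u hu
      rw [List.length_eq_zero_iff] at hu
      subst hu
      simp [history]
  | succ n ih =>
      intro u hu
      cases u with
      | nil => simp at hu
      | cons b v =>
          have hv : v.length = n := by simpa using hu
          have hins : Finset.Icc 1 (n+1) = insert (n+1) (Finset.Icc 1 n) :=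
            (Finset.insert_Icc_right_eq_Icc_add_one (by omega)).symm
          constructor
          · intro h k hk
            obtain ⟨hb, hh⟩ := List.cons_eq_cons.mp h
            rw [Finset.mem_Icc] at hk
            rcases eq_or_lt_of_le hk.2 with rfl | hlt
            · simpa using hb
            · have hk' : k ∈ Finset.Icc 1 n := Finset.mem_Icc.mpr ⟨hk.1, by omega⟩
              have e : n + 1 - k = (n - k) + 1 := by omega
              rw [e, List.getD_cons_succ]
              exact (ih v hv).mp hh k hk'
          · intro h
            have hb : w (n+1) = b := by
              have := h (n+1) (Finset.mem_Icc.mpr ⟨by omega, le_refl _⟩)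
              simpa using this
            have hv' : history w n = v := by
              refine (ih v hv).mpr (fun k hk => ?_)
              rw [Finset.mem_Icc] at hk
              have hk' : k ∈ Finset.Icc 1 (n+1) := Finset.mem_Icc.mpr ⟨hk.1, by omega⟩
              have := h k hk'
              have e : n + 1 - k = (n - k) + 1 := by omega
              rwa [e, List.getD_cons_succ] at this
            show w (n+1) :: history w n = b :: v
            rw [hb, hv']

variable (hindep : iIndepFun (m := fun _ => ⊤) W μ)
  (hbern : ∀ n, 1 ≤ n → μ {ω | W n ω = true} = ENNReal.ofReal (1 / 2))

include hindep hbern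

omit hindep in
lemma W_true_half (hW : ∀ n, Measurable (W n)) (k : ℕ) (hk : 1 ≤ k) :
    μ (W k ⁻¹' {true}) = 2⁻¹ := by
  have h := hbern k hk
  have e : {ω | W k ω = true} = W k ⁻¹' {true} := rfl
  rw [e] at h
  rw [h, ENNReal.ofReal_div_of_pos (by norm_num)]
  simp

omit hindep in
lemma W_false_half (hW : ∀ n, Measurable (W n)) (k : ℕ) (hk : 1 ≤ k) :
    μ (W k ⁻¹' {false}) = 2⁻¹ := by
  have e : W k ⁻¹' {false} = (W k ⁻¹' {true})ᶜ := by
    ext ω; cases h : W k ω <;> simp [h]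
  rw [e, measure_compl ((hW k) (measurableSet_singleton true)) (measure_ne_top μ _),
    W_true_half μ W hbern hW k hk, measure_univ]
  exact ENNReal.one_sub_inv_two

lemma cylinder_measure (hW : ∀ n, Measurable (W n)) (n : ℕ) (u : List Bool)
    (hu : u.length = n) :
    μ {ω | history (fun k => W k ω) n = u} = 2⁻¹ ^ n := by
  have hset : {ω | history (fun k => W k ω) n = u}
      = ⋂ k ∈ Finset.Icc 1 n, W k ⁻¹' {u.getD (n - k) false} := by
    ext ω
    rw [Set.mem_setOf_eq, hist_eq_iff (fun k => W k ω) n u hu]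
    simp [Set.mem_iInter]
  rw [hset]
  rw [(iIndepFun_iff_measure_inter_preimage_eq_mul.mp hindep) (Finset.Icc 1 n)
    (fun k hk => MeasurableSpace.measurableSet_top)]
  have : ∀ k ∈ Finset.Icc 1 n, μ (W k ⁻¹' {u.getD (n - k) false}) = 2⁻¹ := by
    intro k hk
    rw [Finset.mem_Icc] at hk
    cases h : u.getD (n - k) false
    · exact W_false_half μ W hbern hW k hk.1
    · exact W_true_half μ W hbern hW k hk.1
  rw [Finset.prod_congr rfl this, Finset.prod_const, Nat.card_Icc]
  norm_num

lemma event_measure (hW : ∀ n, Measurable (W n)) (n : ℕ) (p : List Bool → Prop) :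
    μ {ω | p (history (fun k => W k ω) n)} = ENNReal.ofReal (avg n (indP p)) := by
  classical
  have hsub : {ω | p (history (fun k => W k ω) n)}
      = ⋃ u ∈ (wordsL n).toFinset.filter p, {ω | history (fun k => W k ω) n = u} := by
    ext ω
    simp only [Set.mem_setOf_eq, Set.mem_iUnion, Finset.mem_filter, List.mem_toFinset]
    constructor
    · intro h
      exact ⟨history (fun k => W k ω) n,
        ⟨⟨mem_wordsL.mpr (history_length _ n), h⟩, rfl⟩⟩
    · rintro ⟨u, ⟨⟨hu, hp⟩, he⟩⟩
      rw [he]; exact hp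
  rw [hsub]
  rw [measure_biUnion_finset ?hd ?hm]
  case hd =>
    intro u hu v hv huv
    apply Set.disjoint_left.mpr
    intro ω h1 h2
    rw [Set.mem_setOf_eq] at h1 h2
    exact huv (h1 ▸ h2 ▸ rfl)
  case hm =>
    intro u hu
    exact measSet W hW n (fun v => v = u)
  have hval : ∀ u ∈ (wordsL n).toFinset.filter p,
      μ {ω | history (fun k => W k ω) n = u} = 2⁻¹ ^ n := by
    intro u hu
    rw [Finset.mem_filter, List.mem_toFinset] at hu
    exact cylinder_measure μ W hindep hbern hW n u (mem_wordsL.mp hu.1)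
  rw [Finset.sum_congr rfl hval, Finset.sum_const, avg_indP_eq_card]
  rw [ENNReal.ofReal_div_of_pos (by positivity), ENNReal.ofReal_natCast,
    ENNReal.ofReal_pow (by norm_num)]
  simp only [nsmul_eq_mul]
  rw [ENNReal.ofReal_ofNat]
  rw [ENNReal.div_eq_inv_mul, ← ENNReal.inv_pow, mul_comm]

end Transfer

section MoreDet

variable {L₀ : List ℝ}

lemma sum_pos_of_ne_nil (hne : L₀ ≠ []) (hpos : ∀ x ∈ L₀, 0 < x) : 0 < L₀.sum := by
  obtain ⟨x, hx⟩ := List.exists_mem_of_ne_nil L₀ hne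
  exact lt_of_lt_of_le (hpos x hx) (List.single_le_sum (fun y hy => (hpos y hy).le) x hx)

lemma hitS_anti {y y' : ℝ} (h : y ≤ y') : ∀ u, hitS L₀ y' u → hitS L₀ y u := by
  intro u
  induction u with
  | nil => intro hu; exact le_trans h hu
  | cons b u ih =>
      rintro (hu | hu)
      · exact Or.inl (ih hu)
      · exact Or.inr (le_trans h hu)

lemma hitS_hist_iff (w : ℕ → Bool) (y : ℝ) :
    ∀ n, hitS L₀ y (history w n) ↔ ∃ m ≤ n, y ≤ (run L₀ (history w m)).sum := by
  intro n
  induction n with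
  | zero =>
      constructor
      · intro h; exact ⟨0, le_refl _, h⟩
      · rintro ⟨m, hm, h⟩
        rw [Nat.le_zero] at hm
        subst hm
        exact h
  | succ n ih =>
      constructor
      · rintro (h | h)
        · obtain ⟨m, hm, h⟩ := ih.mp h
          exact ⟨m, by omega, h⟩
        · exact ⟨n + 1, le_refl _, h⟩
      · rintro ⟨m, hm, h⟩
        rcases Nat.eq_or_lt_of_le hm with rfl | hlt
        · exact Or.inr h
        · exact Or.inl (ih.mpr ⟨m, by omega, h⟩)

lemma hitL_hist_iff (w : ℕ → Bool) (lam : ℕ) :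
    ∀ n, hitL L₀ lam (history w n) ↔ ∃ m ≤ n, lam ≤ (run L₀ (history w m)).length := by
  intro n
  induction n with
  | zero =>
      constructor
      · intro h; exact ⟨0, le_refl _, h⟩
      · rintro ⟨m, hm, h⟩
        rw [Nat.le_zero] at hm
        subst hm
        exact h
  | succ n ih =>
      constructor
      · rintro (h | h)
        · obtain ⟨m, hm, h⟩ := ih.mp h
          exact ⟨m, by omega, h⟩
        · exact ⟨n + 1, le_refl _, h⟩
      · rintro ⟨m, hm, h⟩
        rcases Nat.eq_or_lt_of_le hm with rfl | hlt
        · exact Or.inr h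
        · exact Or.inl (ih.mpr ⟨m, by omega, h⟩)

lemma hitS_hist_mono (w : ℕ → Bool) (y : ℝ) (n : ℕ) (h : hitS L₀ y (history w n)) :
    hitS L₀ y (history w (n + 1)) := Or.inl h

lemma hitL_hist_mono (w : ℕ → Bool) (lam : ℕ) (n : ℕ) (h : hitL L₀ lam (history w n)) :
    hitL L₀ lam (history w (n + 1)) := Or.inl h

lemma ofReal_betSup_le (w : ℕ → Bool) :
    ∀ m, ENNReal.ofReal (betSup L₀ (history w m))
      ≤ ⨆ n, ENNReal.ofReal (labBet (run L₀ (history w n))) := by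
  intro m
  induction m with
  | zero => exact le_iSup (fun n => ENNReal.ofReal (labBet (run L₀ (history w n)))) 0
  | succ m ih =>
      show ENNReal.ofReal (max (betSup L₀ (history w m)) (labBet (run L₀ (history w (m+1))))) ≤ _
      rcases max_cases (betSup L₀ (history w m)) (labBet (run L₀ (history w (m+1)))) with
        ⟨he, _⟩ | ⟨he, _⟩
      · rw [he]; exact ih
      · rw [he]
        exact le_iSup (fun n => ENNReal.ofReal (labBet (run L₀ (history w n)))) (m+1)

lemma six_mul_le_pow (k : ℕ) (hk : 1 ≤ k) : (6 * k : ℝ) ≤ 8 ^ k := by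
  induction k with
  | zero => omega
  | succ k ih =>
      rcases Nat.eq_or_lt_of_le hk with h | h
      · rw [← h]; norm_num
      · have hk' : 1 ≤ k := by omega
        have h8 : (1:ℝ) ≤ 8 ^ k := one_le_pow₀ (by norm_num)
        have := ih hk'
        push_cast
        rw [pow_succ]
        push_cast at this
        nlinarith

end MoreDet

section Events

variable {Ω : Type} [MeasurableSpace Ω]

/-- the event that the running sum ever reaches `y`. -/
def HitSet (W : ℕ → Ω → Bool) (L₀ : List ℝ) (y : ℝ) : Set Ω :=
  ⋃ n, {ω | hitS L₀ y (history (fun k => W k ω) n)}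

/-- the event that the list length ever reaches `lam`. -/
def HitLen (W : ℕ → Ω → Bool) (L₀ : List ℝ) (lam : ℕ) : Set Ω :=
  ⋃ n, {ω | hitL L₀ lam (history (fun k => W k ω) n)}

variable {W : ℕ → Ω → Bool} {L₀ : List ℝ}

lemma HitSet_measurable (hW : ∀ n, Measurable (W n)) (y : ℝ) :
    MeasurableSet (HitSet W L₀ y) :=
  MeasurableSet.iUnion (fun n => measSet W hW n (hitS L₀ y))

lemma HitLen_measurable (hW : ∀ n, Measurable (W n)) (lam : ℕ) :
    MeasurableSet (HitLen W L₀ lam) :=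
  MeasurableSet.iUnion (fun n => measSet W hW n (hitL L₀ lam))

lemma HitSet_anti {y y' : ℝ} (h : y ≤ y') : HitSet W L₀ y' ⊆ HitSet W L₀ y := by
  intro ω hω
  obtain ⟨s, ⟨n, rfl⟩, hn⟩ := hω
  exact Set.mem_iUnion.mpr ⟨n, hitS_anti h _ hn⟩

variable (μ : Measure Ω) [IsProbabilityMeasure μ]
variable (hindep : iIndepFun (m := fun _ => ⊤) W μ)
  (hbern : ∀ n, 1 ≤ n → μ {ω | W n ω = true} = ENNReal.ofReal (1 / 2))
  (hW : ∀ n, Measurable (W n)) (hpos : ∀ x ∈ L₀, 0 < x)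

include hindep hbern hW hpos

lemma measure_HitSet_le {y : ℝ} (hy : 0 < y) :
    μ (HitSet W L₀ y) ≤ ENNReal.ofReal (L₀.sum / y) := by
  have hdir : Directed (· ⊆ ·) (fun n => {ω : Ω | hitS L₀ y (history (fun k => W k ω) n)}) := by
    apply Monotone.directed_le
    intro a b hab ω hω
    simp only [Set.mem_setOf_eq] at hω ⊢
    induction b with
    | zero => rw [Nat.le_zero] at hab; subst hab; exact hω
    | succ b ihb =>
        rcases Nat.eq_or_lt_of_le hab with rfl | hlt
        · exact hω
        · exact hitS_hist_mono _ _ _ (ihb (by omega))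
  rw [HitSet, Directed.measure_iUnion hdir]
  apply iSup_le
  intro n
  rw [event_measure μ W hindep hbern hW n (hitS L₀ y)]
  apply ENNReal.ofReal_le_ofReal
  rw [le_div_iff₀ hy]
  have := hitS_prob_upper hpos hy n
  linarith [this]

lemma measure_HitLen_le {lam : ℕ} (hlam : 2 ≤ lam) :
    μ (HitLen W L₀ lam) ≤ ENNReal.ofReal ((3/2 : ℝ) ^ L₀.length / (3/2 : ℝ) ^ lam) := by
  have hdir : Directed (· ⊆ ·) (fun n => {ω : Ω | hitL L₀ lam (history (fun k => W k ω) n)}) := by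
    apply Monotone.directed_le
    intro a b hab ω hω
    simp only [Set.mem_setOf_eq] at hω ⊢
    induction b with
    | zero => rw [Nat.le_zero] at hab; subst hab; exact hω
    | succ b ihb =>
        rcases Nat.eq_or_lt_of_le hab with rfl | hlt
        · exact hω
        · exact hitL_hist_mono _ _ _ (ihb (by omega))
  rw [HitLen, Directed.measure_iUnion hdir]
  apply iSup_le
  intro n
  rw [event_measure μ W hindep hbern hW n (hitL L₀ lam)]
  apply ENNReal.ofReal_le_ofReal
  rw [le_div_iff₀ (by positivity)]
  have := hitL_prob_upper (L₀ := L₀) hlam n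
  linarith [this]

lemma measure_HitSet_ge {y : ℝ} (hy : L₀.sum < y) :
    ENNReal.ofReal (L₀.sum / (2 * y)) ≤ μ (HitSet W L₀ y) := by
  have hs0 : 0 ≤ L₀.sum := sum_nonneg_of_pos hpos
  have hy0 : 0 < y := lt_of_le_of_lt hs0 hy
  set c : ℝ := 3 * fpot L₀.length with hc
  have hc0 : 0 ≤ c := by
    rw [hc]; have := fpot_nonneg L₀.length; linarith
  apply ENNReal.le_of_forall_pos_le_add
  intro ε hε _
  have hε' : (0:ℝ) < (ε : ℝ) := hε
  obtain ⟨n, hn⟩ := exists_nat_gt (c / (2 * (ε : ℝ)))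
  have key : L₀.sum / (2 * y) ≤ avg n (indP (hitS L₀ y)) + c / (2 * (n + 1)) := by
    have h1 := hitS_prob_lower hpos hy n
    have h2 := alive_prob_le (L₀ := L₀) n
    set P := avg n (indP (hitS L₀ y))
    set a := avg n (indP (fun u => run L₀ u ≠ []))
    have ha0 : 0 ≤ a := avg_indP_nonneg _ n
    have hP0 : 0 ≤ P := avg_indP_nonneg _ n
    have hn1 : (0:ℝ) < n + 1 := by positivity
    rw [div_le_iff₀ (by positivity)]
    have ha : a ≤ c / (n + 1) := by
      rw [le_div_iff₀ hn1]; linarith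
    have : y * a ≤ y * (c / (n+1)) := by
      apply mul_le_mul_of_nonneg_left ha (le_of_lt hy0)
    have hexp : (P + c / (2 * (n + 1))) * (2 * y) = 2 * y * P + y * (c / (n+1)) := by
      field_simp
    rw [hexp]
    linarith
  have hcn : c / (2 * ((n:ℝ) + 1)) ≤ (ε : ℝ) := by
    rw [div_le_iff₀ (by positivity)]
    rw [div_lt_iff₀ (by positivity)] at hn
    nlinarith
  calc ENNReal.ofReal (L₀.sum / (2 * y))
      ≤ ENNReal.ofReal (avg n (indP (hitS L₀ y)) + c / (2 * (n + 1))) :=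
        ENNReal.ofReal_le_ofReal key
    _ ≤ ENNReal.ofReal (avg n (indP (hitS L₀ y))) + ENNReal.ofReal (c / (2 * (n + 1))) :=
        ENNReal.ofReal_add_le
    _ ≤ μ (HitSet W L₀ y) + ↑ε := by
        apply add_le_add
        · rw [← event_measure μ W hindep hbern hW n (hitS L₀ y)]
          exact measure_mono (Set.subset_iUnion
            (fun n => {ω : Ω | hitS L₀ y (history (fun k => W k ω) n)}) n)
        · calc ENNReal.ofReal (c / (2 * (n + 1))) ≤ ENNReal.ofReal (ε : ℝ) :=
                ENNReal.ofReal_le_ofReal hcn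
            _ = ↑ε := ENNReal.ofReal_coe_nnreal

end Events

section Pointwise

variable {Ω : Type} {W : ℕ → Ω → Bool} {L₀ : List ℝ}

lemma betSup_nonneg (hpos : ∀ x ∈ L₀, 0 < x) (u : List Bool) : 0 ≤ betSup L₀ u := by
  induction u with
  | nil => exact labBet_nonneg hpos
  | cons b u ih => exact le_trans ih (betSup_le_of_cons L₀ b u)

lemma X_pointwise (hpos : ∀ x ∈ L₀, 0 < x) {y : ℝ} {lam : ℕ}
    (hlam : 0 < lam) (hsy : L₀.sum ≤ y / (2 * lam)) (hy0 : 0 < y) {ω : Ω}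
    (h1 : ω ∈ HitSet W L₀ y) (h2 : ω ∉ HitLen W L₀ lam) :
    ENNReal.ofReal (y / (2 * lam))
      ≤ ⨆ n, ENNReal.ofReal (labBet (run L₀ (history (fun k => W k ω) n))) := by
  set w := fun k => W k ω with hw
  obtain ⟨_, ⟨n, rfl⟩, hn⟩ := h1
  obtain ⟨m, hmn, hym⟩ := (hitS_hist_iff w y n).mp hn
  have hlen : ((run L₀ (history w m)).length : ℝ) ≤ lam := by
    by_contra hcon
    push_neg at hcon
    apply h2
    have hln : lam ≤ (run L₀ (history w m)).length := by exact_mod_cast hcon.le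
    exact Set.mem_iUnion.mpr ⟨m, (hitL_hist_iff w lam m).mpr ⟨m, le_refl _, hln⟩⟩
  have hs0 : 0 ≤ L₀.sum := sum_nonneg_of_pos hpos
  have hbs0 : 0 ≤ betSup L₀ (history w m) := betSup_nonneg hpos _
  have hchain := sum_run_le L₀ hpos (history w m)
  set b := betSup L₀ (history w m) with hb
  have hy1 : y ≤ (lam : ℝ) * (L₀.sum + b) := by
    have h3 : ((run L₀ (history w m)).length : ℝ) * (L₀.sum + b)
        ≤ (lam : ℝ) * (L₀.sum + b) :=
      mul_le_mul_of_nonneg_right hlen (by linarith)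
    linarith
  have hlam' : (0:ℝ) < lam := by exact_mod_cast hlam
  have hsy' : L₀.sum * (2 * lam) ≤ y := by
    rw [le_div_iff₀ (by positivity)] at hsy
    linarith
  have hfin : y / (2 * lam) ≤ b := by
    rw [div_le_iff₀ (by positivity)]
    nlinarith
  exact le_trans (ENNReal.ofReal_le_ofReal hfin) (ofReal_betSup_le w m)

end Pointwise

section Harmonic

lemma tsum_ofReal_harmonic_eq_top {c : ℝ} (hc : 0 < c) (m : ℕ) :
    ∑' j : ℕ, ENNReal.ofReal (c / ((j : ℝ) + m + 1)) = ⊤ := by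
  by_contra h
  have h1 : Summable (fun j : ℕ => (c / ((j:ℝ) + m + 1)).toNNReal) :=
    ENNReal.tsum_coe_ne_top_iff_summable.mp h
  have h2 : Summable (fun j : ℕ => c / ((j:ℝ) + m + 1)) := by
    have h2a : Summable (fun j : ℕ => ((c / ((j:ℝ) + m + 1)).toNNReal : ℝ)) :=
      NNReal.summable_coe.mpr h1
    have : (fun j : ℕ => ((c / ((j:ℝ) + m + 1)).toNNReal : ℝ))
        = fun j : ℕ => c / ((j:ℝ) + m + 1) := by
      funext j
      exact Real.coe_toNNReal _ (by positivity)
    rwa [this] at h2a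
  have h3 : Summable (fun j : ℕ => ((j:ℝ) + m + 1)⁻¹) := by
    have h3a := h2.mul_left c⁻¹
    have : (fun j : ℕ => c⁻¹ * (c / ((j:ℝ) + m + 1))) = fun j : ℕ => ((j:ℝ) + m + 1)⁻¹ := by
      funext j
      field_simp
    rwa [this] at h3a
  have h4 : Summable (fun j : ℕ => ((j + (m + 1) : ℕ) : ℝ)⁻¹) := by
    have : (fun j : ℕ => ((j + (m + 1) : ℕ) : ℝ)⁻¹) = fun j : ℕ => ((j:ℝ) + m + 1)⁻¹ := by
      funext j
      push_cast
      ring_nf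
    rwa [this]
  rw [summable_nat_add_iff (f := fun n : ℕ => ((n : ℝ))⁻¹) (m + 1)] at h4
  exact Real.not_summable_natCast_inv h4

end Harmonic

section MainCore

theorem main_core {Ω : Type} [MeasurableSpace Ω] (μ : Measure Ω) [IsProbabilityMeasure μ]
    (W : ℕ → Ω → Bool) (hW : ∀ n, Measurable (W n))
    (hindep : iIndepFun (m := fun _ => ⊤) W μ)
    (hbern : ∀ n, 1 ≤ n → μ {ω | W n ω = true} = ENNReal.ofReal (1 / 2))
    (L₀ : List ℝ) (hL₀ : L₀ ≠ []) (hpos : ∀ x ∈ L₀, 0 < x) :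
    ∫⁻ ω, (⨆ n : ℕ, ENNReal.ofReal (labBet (run L₀ (history (fun k => W k ω) n)))) ∂μ = ⊤ := by
  classical
  set s := L₀.sum with hsdef
  have hs : 0 < s := sum_pos_of_ne_nil hL₀ hpos
  set X : Ω → ENNReal :=
    fun ω => ⨆ n : ℕ, ENNReal.ofReal (labBet (run L₀ (history (fun k => W k ω) n))) with hX
  -- choose k₀ such that the length-event correction is small
  have htend : Filter.Tendsto (fun k : ℕ => ((3:ℝ)/2) ^ L₀.length * ((512:ℝ)/729) ^ k)
      Filter.atTop (nhds 0) := by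
    have h0 := tendsto_pow_atTop_nhds_zero_of_lt_one
      (by norm_num : (0:ℝ) ≤ 512/729) (by norm_num : (512:ℝ)/729 < 1)
    have h1 := h0.const_mul (((3:ℝ)/2) ^ L₀.length)
    simpa using h1
  have hev : ∀ᶠ k in Filter.atTop, ((3:ℝ)/2) ^ L₀.length * ((512:ℝ)/729) ^ k < 1/16 :=
    htend.eventually (gt_mem_nhds (by norm_num : (0:ℝ) < 1/16))
  obtain ⟨k₀, hk₀⟩ := Filter.eventually_atTop.mp hev
  set y : ℕ → ℝ := fun k => 2 * s * 8 ^ k with hy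
  have hyk_pos : ∀ k, 0 < y k := by
    intro k
    simp only [hy]
    have : (0:ℝ) < 8 ^ k := by positivity
    nlinarith
  have hys : ∀ k, s < y k := by
    intro k
    simp only [hy]
    have h8 : (1:ℝ) ≤ 8 ^ k := one_le_pow₀ (by norm_num)
    nlinarith
  -- the key measure lower bound for the annulus events
  have hAnn : ∀ k, 1 ≤ k → k₀ ≤ k →
      ENNReal.ofReal (1 / (8 * 8 ^ k)) ≤
        μ (HitSet W L₀ (y k) \ (HitSet W L₀ (y (k+1)) ∪ HitLen W L₀ (6 * k))) := by
    intro k hk1 hkk0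
    have h8pos : (0:ℝ) < 8 ^ k := by positivity
    have hga : ENNReal.ofReal (1 / (4 * 8 ^ k)) ≤ μ (HitSet W L₀ (y k)) := by
      have h := measure_HitSet_ge μ hindep hbern hW hpos (hys k)
      have he : s / (2 * y k) = 1 / (4 * 8 ^ k) := by
        simp only [hy]
        field_simp
        ring
      rwa [he] at h
    have hgb : μ (HitSet W L₀ (y (k+1))) ≤ ENNReal.ofReal (1 / (16 * 8 ^ k)) := by
      have h := measure_HitSet_le μ hindep hbern hW hpos (hyk_pos (k+1))
      apply le_trans h
      apply ENNReal.ofReal_le_ofReal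
      have he : s / y (k+1) = 1 / (16 * 8 ^ k) := by
        simp only [hy, pow_succ]
        field_simp
        ring
      rw [he]
    have hgc : μ (HitLen W L₀ (6 * k)) ≤ ENNReal.ofReal (1 / (16 * 8 ^ k)) := by
      have h2k : 2 ≤ 6 * k := by omega
      have h := measure_HitLen_le μ hindep hbern hW hpos h2k
      apply le_trans h
      apply ENNReal.ofReal_le_ofReal
      have hlt := hk₀ k hkk0
      have hP : (0:ℝ) < ((729:ℝ)/64) ^ k := by positivity
      have he2 : 8 ^ k / ((729:ℝ)/64) ^ k = ((512:ℝ)/729) ^ k := by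
        rw [← div_pow]
        norm_num
      rw [← he2, ← mul_div_assoc] at hlt
      have hlt2 : ((3:ℝ)/2) ^ L₀.length * 8 ^ k < 1/16 * ((729:ℝ)/64) ^ k :=
        (div_lt_iff₀ hP).mp hlt
      have he3 : ((3:ℝ)/2) ^ (6 * k) = ((729:ℝ)/64) ^ k := by
        rw [pow_mul]
        norm_num
      rw [he3, div_le_div_iff₀ (by positivity) (by positivity)]
      nlinarith [hlt2]
    have hsub : HitSet W L₀ (y k) ⊆
        (HitSet W L₀ (y k) \ (HitSet W L₀ (y (k+1)) ∪ HitLen W L₀ (6 * k)))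
          ∪ (HitSet W L₀ (y (k+1)) ∪ HitLen W L₀ (6 * k)) := by
      intro ω hω
      by_cases hmem : ω ∈ HitSet W L₀ (y (k+1)) ∪ HitLen W L₀ (6 * k)
      · exact Or.inr hmem
      · exact Or.inl ⟨hω, hmem⟩
    have hm1 : μ (HitSet W L₀ (y k)) ≤
        μ (HitSet W L₀ (y k) \ (HitSet W L₀ (y (k+1)) ∪ HitLen W L₀ (6 * k)))
          + (μ (HitSet W L₀ (y (k+1))) + μ (HitLen W L₀ (6 * k))) :=
      le_trans (measure_mono hsub)
        (le_trans (measure_union_le _ _) (add_le_add_right (measure_union_le _ _) _))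
    have hm2 : ENNReal.ofReal (1 / (4 * 8 ^ k)) ≤
        μ (HitSet W L₀ (y k) \ (HitSet W L₀ (y (k+1)) ∪ HitLen W L₀ (6 * k)))
          + ENNReal.ofReal (1 / (8 * 8 ^ k)) := by
      refine le_trans hga (le_trans hm1 ?_)
      apply add_le_add_right
      refine le_trans (add_le_add hgb hgc) ?_
      rw [← ENNReal.ofReal_add (by positivity) (by positivity)]
      apply ENNReal.ofReal_le_ofReal
      apply le_of_eq
      field_simp
      ring
    have hm3 := tsub_le_iff_right.mpr hm2
    rw [← ENNReal.ofReal_sub _ (by positivity)] at hm3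
    refine le_trans ?_ hm3
    apply ENNReal.ofReal_le_ofReal
    apply le_of_eq
    field_simp
    ring
  -- the annulus events
  set K : ℕ → ℕ := fun j => k₀ + 1 + j with hK
  set A : ℕ → Set Ω := fun j =>
    HitSet W L₀ (y (K j)) \ (HitSet W L₀ (y (K j + 1)) ∪ HitLen W L₀ (6 * K j)) with hA
  have hAmeas : ∀ j, MeasurableSet (A j) := by
    intro j
    simp only [hA]
    exact (HitSet_measurable hW _).diff ((HitSet_measurable hW _).union (HitLen_measurable hW _))
  have hdisj : Pairwise (Function.onFun Disjoint A) := by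
    have key : ∀ i j, i < j → Disjoint (A i) (A j) := by
      intro i j hij
      rw [Set.disjoint_left]
      intro ω hωi hωj
      simp only [hA] at hωi hωj
      apply hωi.2
      apply Or.inl
      have hKle : K i + 1 ≤ K j := by simp only [hK]; omega
      have hylow : y (K i + 1) ≤ y (K j) := by
        simp only [hy]
        have h8 : (8:ℝ) ^ (K i + 1) ≤ 8 ^ (K j) := pow_le_pow_right₀ (by norm_num) hKle
        nlinarith
      exact HitSet_anti hylow hωj.1
    intro i j hij
    rcases lt_or_gt_of_ne hij with h | h
    · exact key i j h
    · exact (key j i h).symm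
  have hK1 : ∀ j, 1 ≤ K j := by intro j; simp only [hK]; omega
  have hKk₀ : ∀ j, k₀ ≤ K j := by intro j; simp only [hK]; omega
  have hAlow : ∀ j, ENNReal.ofReal (1 / (8 * 8 ^ (K j))) ≤ μ (A j) := by
    intro j
    simp only [hA]
    exact hAnn (K j) (hK1 j) (hKk₀ j)
  -- pointwise lower bound on A j
  have hpoint : ∀ j, ∀ ω ∈ A j,
      ENNReal.ofReal (y (K j) / (2 * ((6 * K j : ℕ) : ℝ))) ≤ X ω := by
    intro j ω hω
    simp only [hA] at hω
    have hk1 := hK1 j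
    have hsy : L₀.sum ≤ y (K j) / (2 * ((6 * K j : ℕ) : ℝ)) := by
      have h6 := six_mul_le_pow (K j) hk1
      have hkpos : (0:ℝ) < ((6 * K j : ℕ) : ℝ) := by
        have : 1 ≤ 6 * K j := by omega
        exact_mod_cast Nat.lt_of_lt_of_le Nat.zero_lt_one this
      rw [le_div_iff₀ (by positivity)]
      simp only [hy]
      push_cast
      have h8 : (0:ℝ) < 8 ^ (K j) := by positivity
      nlinarith
    exact X_pointwise hpos (by omega : 0 < 6 * K j) hsy (hyk_pos (K j)) hω.1
      (fun hc => hω.2 (Or.inr hc))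
  -- per-annulus integral bound
  have hInt : ∀ j : ℕ, ENNReal.ofReal (s / (48 * ((j:ℝ) + k₀ + 1)))
      ≤ ∫⁻ ω in A j, X ω ∂μ := by
    intro j
    have hle1 : ENNReal.ofReal (y (K j) / (2 * ((6 * K j : ℕ) : ℝ)))
        * ENNReal.ofReal (1 / (8 * 8 ^ (K j))) ≤ ∫⁻ ω in A j, X ω ∂μ := by
      calc ENNReal.ofReal (y (K j) / (2 * ((6 * K j : ℕ) : ℝ)))
            * ENNReal.ofReal (1 / (8 * 8 ^ (K j)))
          ≤ ENNReal.ofReal (y (K j) / (2 * ((6 * K j : ℕ) : ℝ))) * μ (A j) :=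
            mul_le_mul_right (hAlow j) _
        _ = ∫⁻ _ω in A j, ENNReal.ofReal (y (K j) / (2 * ((6 * K j : ℕ) : ℝ))) ∂μ :=
            (setLIntegral_const _ _).symm
        _ ≤ ∫⁻ ω in A j, X ω ∂μ := setLIntegral_mono' (hAmeas j) (hpoint j)
    refine le_trans ?_ hle1
    rw [← ENNReal.ofReal_mul (by positivity)]
    apply ENNReal.ofReal_le_ofReal
    have hKj : ((K j : ℕ) : ℝ) = (j:ℝ) + k₀ + 1 := by simp only [hK]; push_cast; ring
    have hkpos : (0:ℝ) < ((K j : ℕ) : ℝ) := by exact_mod_cast hK1 j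
    apply le_of_eq
    have h8 : (0:ℝ) < 8 ^ (K j) := by positivity
    simp only [hy]
    push_cast
    rw [← hKj]
    field_simp
    ring
  -- conclude
  have hUnion : ∫⁻ ω in ⋃ j, A j, X ω ∂μ = ∑' j, ∫⁻ ω in A j, X ω ∂μ :=
    lintegral_iUnion hAmeas hdisj X
  have htop : (∑' j : ℕ, ENNReal.ofReal (s / (48 * ((j:ℝ) + k₀ + 1)))) = ⊤ := by
    have h := tsum_ofReal_harmonic_eq_top (c := s / 48) (by positivity) k₀
    rw [← h]
    apply tsum_congr
    intro j
    congr 1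
    rw [div_div]
  rw [eq_top_iff]
  calc (⊤ : ENNReal) = ∑' j : ℕ, ENNReal.ofReal (s / (48 * ((j:ℝ) + k₀ + 1))) := htop.symm
    _ ≤ ∑' j, ∫⁻ ω in A j, X ω ∂μ := ENNReal.tsum_le_tsum hInt
    _ = ∫⁻ ω in ⋃ j, A j, X ω ∂μ := hUnion.symm
    _ ≤ ∫⁻ ω, X ω ∂μ := setLIntegral_le_lintegral _ _

end MainCore

end Lab


/-- For the Labouchère system with any nonempty initial list of positive reals, driven by
i.i.d. fair coups (winning probability `p = 1/2`), the largest betting size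
`B⋆ = sup_{1 ≤ n ≤ N} B n` has infinite expectation.  (Bets after the list becomes empty
are `0`, so `B⋆` is the supremum over all coups of the bet, viewed in `ℝ≥0∞`.) -/
theorem labouchere_Bstar_infinite_at_half
    {Ω : Type} [MeasurableSpace Ω] (μ : Measure Ω) [IsProbabilityMeasure μ]
    (W : ℕ → Ω → Bool) (hW : ∀ n, Measurable (W n))
    (hindep : iIndepFun (m := fun _ => ⊤) W μ)
    (hbern : ∀ n, 1 ≤ n → μ {ω | W n ω = true} = ENNReal.ofReal (1 / 2))
    (L₀ : List ℝ) (hL₀ : L₀ ≠ []) (hpos : ∀ x ∈ L₀, 0 < x) :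
    ∫⁻ ω, (⨆ n : ℕ, ENNReal.ofReal (labBet (labList L₀ (fun k => W k ω) n))) ∂μ = ⊤ := by
  have he : (fun ω => ⨆ n : ℕ, ENNReal.ofReal (labBet (labList L₀ (fun k => W k ω) n)))
      = fun ω => ⨆ n : ℕ,
          ENNReal.ofReal (labBet (Lab.run L₀ (Lab.history (fun k => W k ω) n))) := by
    funext ω
    congr 1
    funext n
    rw [Lab.labList_eq_run]
  calc ∫⁻ ω, (⨆ n : ℕ, ENNReal.ofReal (labBet (labList L₀ (fun k => W k ω) n))) ∂μ
      = ∫⁻ ω, (⨆ n : ℕ,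
          ENNReal.ofReal (labBet (Lab.run L₀ (Lab.history (fun k => W k ω) n)))) ∂μ := by
        rw [he]
    _ = ⊤ := Lab.main_core μ W hW hindep hbern L₀ hL₀ hpos
end

section
/- Let (b̄_l)_{l=1}^∞ be a sequence in [0,1] and let (a_l)_{l=1}^∞ be a sequence of nonnegative real numbers satisfying: a_1 ≥ a_2 + 1/2, a_2 ≥ a_3 + 1/2, and for every l ≥ 3, a_l ≥ min_{b∈[0, b̄_l]} ( max{b, (1−b)·a_{l−2}} + max{b, (1+b)·a_{l+1}} ) / 2. Then the sequence is strictly decreasing: a_l > a_{l+1} for every l ≥ 1. -/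
lemma key_bound_1 (A D b : ℝ) (hA0 : 0 ≤ A) (hD0 : 0 ≤ D) (hb0 : 0 ≤ b) (hb1 : b ≤ 1)
    (hDA : D ≤ A) :
    (A + D + 2*A*D)/(2*(1+A)) ≤ (max b ((1-b)*A) + max b ((1+b)*D))/2 := by
  have h1 : (0:ℝ) < 2*(1+A) := by linarith
  rw [div_le_div_iff₀ h1 (by norm_num)]
  have m1 : b ≤ max b ((1-b)*A) := le_max_left _ _
  have m2 : (1-b)*A ≤ max b ((1-b)*A) := le_max_right _ _
  have m3 : (1+b)*D ≤ max b ((1+b)*D) := le_max_right _ _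
  nlinarith [mul_nonneg (sub_nonneg.2 hDA) (sub_nonneg.2 m1),
    mul_nonneg (by linarith : (0:ℝ) ≤ 1+D) (sub_nonneg.2 m2),
    mul_nonneg (by linarith : (0:ℝ) ≤ 1+A) (sub_nonneg.2 m3)]

lemma key_bound_2 (A D b : ℝ) (hA0 : 0 ≤ A) (hD0 : 0 ≤ D) (hb0 : 0 ≤ b) (hb1 : b ≤ 1)
    (hAD : A ≤ D) :
    (A + D)/2 ≤ (max b ((1-b)*A) + max b ((1+b)*D))/2 := by
  have m2 : (1-b)*A ≤ max b ((1-b)*A) := le_max_right _ _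
  have m3 : (1+b)*D ≤ max b ((1+b)*D) := le_max_right _ _
  nlinarith [mul_nonneg hb0 (sub_nonneg.2 hAD)]

/-- Let `(b̄ l)_{l ≥ 1}` be a sequence in `[0,1]` and `(a l)_{l ≥ 1}` a sequence of
nonnegative reals with `a 1 ≥ a 2 + 1/2`, `a 2 ≥ a 3 + 1/2`, and for every `l ≥ 3`
`a l ≥ min_{b ∈ [0, b̄ l]} (max {b, (1-b)·a (l-2)} + max {b, (1+b)·a (l+1)}) / 2`
(the minimum over the compact interval is attained, and equals the infimum used below).
Then the sequence is strictly decreasing: `a l > a (l+1)` for every `l ≥ 1`. -/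
theorem strictly_decreasing_of_recursive_inequalities (bbar : ℕ → ℝ)
    (hbbar : ∀ l, 1 ≤ l → bbar l ∈ Set.Icc (0 : ℝ) 1)
    (a : ℕ → ℝ) (ha : ∀ l, 1 ≤ l → 0 ≤ a l)
    (h1 : a 2 + 1 / 2 ≤ a 1) (h2 : a 3 + 1 / 2 ≤ a 2)
    (hrec : ∀ l : ℕ, 3 ≤ l →
      (⨅ b : Set.Icc (0 : ℝ) (bbar l),
        (max b.1 ((1 - b.1) * a (l - 2)) + max b.1 ((1 + b.1) * a (l + 1))) / 2) ≤ a l) :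
    ∀ l : ℕ, 1 ≤ l → a (l + 1) < a l := by
  intro l
  induction l using Nat.strong_induction_on with
  | _ l IH =>
  intro hl
  match l, hl with
  | 1, _ => linarith
  | 2, _ => linarith
  | (n+3), _ =>
    have IH1 : a (n+2) < a (n+1) := IH (n+1) (by omega) (by omega)
    have IH2 : a (n+3) < a (n+2) := IH (n+2) (by omega) (by omega)
    have hA0 : 0 ≤ a (n+1) := ha _ (by omega)
    have hD0 : 0 ≤ a (n+4) := ha _ (by omega)
    have hbb := hbbar (n+3) (by omega)
    have hrec' := hrec (n+3) (by omega)
    have hidx : (n+3) - 2 = n+1 := by omega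
    rw [hidx] at hrec'
    have hne : Nonempty (Set.Icc (0:ℝ) (bbar (n+3))) := ⟨⟨0, le_refl _, hbb.1⟩⟩
    set A := a (n+1) with hAdef
    set D := a (n+4) with hDdef
    rcases le_total D A with hDA | hAD
    · have hC : (A + D + 2*A*D)/(2*(1+A)) ≤ a (n+3) := by
        refine le_trans (le_ciInf fun b => ?_) hrec'
        exact key_bound_1 A D b.1 hA0 hD0 b.2.1 (le_trans b.2.2 hbb.2) hDA
      have h2A : (0:ℝ) < 2*(1+A) := by linarith
      rw [div_le_iff₀ h2A] at hC
      nlinarith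
    · have hC : (A + D)/2 ≤ a (n+3) := by
        refine le_trans (le_ciInf fun b => ?_) hrec'
        exact key_bound_2 A D b.1 hA0 hD0 b.2.1 (le_trans b.2.2 hbb.2) hAD
      have : a (n+3+1) = D := rfl
      linarith
end

section
/- Let (b̄_l)_{l=1}^∞ be a sequence in [0,1] with lim_{l→∞} b̄_l = 0. Then there is no sequence (a_l)_{l=1}^∞ of nonnegative real numbers satisfying all of: a_1 ≥ a_2 + 1/2, a_2 ≥ a_3 + 1/2, and for every l ≥ 3, a_l ≥ min_{b∈[0, b̄_l]} ( max{b, (1−b)·a_{l−2}} + max{b, (1+b)·a_{l+1}} ) / 2. -/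
set_option maxHeartbeats 1000000


/-- Let `(b̄ l)_{l ≥ 1}` be a sequence in `[0,1]` with `b̄ l → 0` as `l → ∞`.  Then there
is no sequence `(a l)_{l ≥ 1}` of nonnegative reals satisfying `a 1 ≥ a 2 + 1/2`,
`a 2 ≥ a 3 + 1/2`, and for every `l ≥ 3`
`a l ≥ min_{b ∈ [0, b̄ l]} (max {b, (1-b)·a (l-2)} + max {b, (1+b)·a (l+1)}) / 2`
(the minimum over the compact interval is attained, and equals the infimum used below). -/
theorem no_sequence_satisfying_recursive_inequalities (bbar : ℕ → ℝ)
    (hbbar : ∀ l, 1 ≤ l → bbar l ∈ Set.Icc (0 : ℝ) 1)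
    (hlim : Filter.Tendsto bbar Filter.atTop (nhds 0)) :
    ¬ ∃ a : ℕ → ℝ, (∀ l, 1 ≤ l → 0 ≤ a l) ∧
      a 2 + 1 / 2 ≤ a 1 ∧ a 3 + 1 / 2 ≤ a 2 ∧
      ∀ l : ℕ, 3 ≤ l →
        (⨅ b : Set.Icc (0 : ℝ) (bbar l),
          (max b.1 ((1 - b.1) * a (l - 2)) + max b.1 ((1 + b.1) * a (l + 1))) / 2) ≤ a l := by
  rintro ⟨a, ha, h1, h2, hrec⟩
  classical
  -- Key: pointwise lower bounds on the infimand transfer to `a (k+3)`.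
  have key : ∀ (k : ℕ) (C : ℝ),
      (∀ b : ℝ, 0 ≤ b → b ≤ bbar (k+3) →
        C ≤ (max b ((1 - b) * a (k+1)) + max b ((1 + b) * a (k+4))) / 2) →
      C ≤ a (k+3) := by
    intro k C hC
    have h := hrec (k+3) (by omega)
    simp only [show k+3-2 = k+1 by omega, show k+3+1 = k+4 by omega] at h
    haveI : Nonempty (Set.Icc (0:ℝ) (bbar (k+3))) :=
      (Set.nonempty_Icc.mpr (hbbar (k+3) (by omega)).1).to_subtype
    refine le_trans (le_ciInf ?_) h
    rintro ⟨b, hB1, hB2⟩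
    exact hC b hB1 hB2
  -- Lemma B
  have lemB : ∀ k : ℕ, 0 ≤ a (k+1) - a (k+3) →
      (1 - bbar (k+3)) * (a (k+1) - a (k+3)) ≤ (1 + bbar (k+3)) * (a (k+3) - a (k+4)) := by
    intro k hs
    obtain ⟨hb0, hb1⟩ := hbbar (k+3) (by omega)
    have hmin : min ((a (k+1) + a (k+4))/2)
        (((1 - bbar (k+3)) * a (k+1) + (1 + bbar (k+3)) * a (k+4))/2) ≤ a (k+3) := by
      apply key
      intro b hB0 hBb
      have m1 := le_max_right b ((1-b) * a (k+1))
      have m2 := le_max_right b ((1+b) * a (k+4))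
      rcases le_total (a (k+1)) (a (k+4)) with h | h
      · refine le_trans (min_le_left _ _) ?_
        nlinarith [mul_nonneg hB0 (sub_nonneg.mpr h)]
      · refine le_trans (min_le_right _ _) ?_
        nlinarith [mul_nonneg (sub_nonneg.mpr hBb) (sub_nonneg.mpr h)]
    rcases min_cases ((a (k+1) + a (k+4))/2)
        (((1 - bbar (k+3)) * a (k+1) + (1 + bbar (k+3)) * a (k+4))/2) with ⟨hm, _⟩ | ⟨hm, _⟩ <;>
      rw [hm] at hmin
    · nlinarith [mul_nonneg hb0 (show (0:ℝ) ≤ a (k+1) - a (k+4) by linarith)]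
    · nlinarith
  -- Monotonicity: a (k+2) ≤ a (k+1) and a (k+3) ≤ a (k+2)
  have mono2 : ∀ k : ℕ, a (k+2) ≤ a (k+1) ∧ a (k+3) ≤ a (k+2) := by
    intro k
    induction k with
    | zero => exact ⟨by linarith, by linarith⟩
    | succ n ih =>
      refine ⟨ih.2, ?_⟩
      show a (n+4) ≤ a (n+3)
      have hs : 0 ≤ a (n+1) - a (n+3) := by linarith [ih.1, ih.2]
      have h := lemB n hs
      obtain ⟨hb0, hb1⟩ := hbbar (n+3) (by omega)
      nlinarith [mul_nonneg (show (0:ℝ) ≤ 1 - bbar (n+3) by linarith) hs]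
  have mono' : ∀ m : ℕ, 1 ≤ m → a (m+1) ≤ a m := by
    intro m hm
    obtain ⟨p, rfl⟩ := Nat.exists_eq_add_of_le hm
    have := (mono2 p).1
    simpa [show 1+p+1 = p+2 by omega, show 1+p = p+1 by omega] using this
  -- Lemma C: no "flat spot after a strict drop"
  have lemC : ∀ k : ℕ, a (k+3) < a (k+1) → a (k+3) = a (k+4) → False := by
    intro k hlt heq
    obtain ⟨hb0, hb1⟩ := hbbar (k+3) (by omega)
    have hx0 : 0 ≤ a (k+1) := ha (k+1) (by omega)
    have hc0 : 0 ≤ a (k+3) := ha (k+3) (by omega)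
    have h1x : (0:ℝ) < 1 + a (k+1) := by linarith
    obtain ⟨t, ht, ht0⟩ : ∃ t : ℝ, t * (1 + a (k+1)) = a (k+1) ∧ 0 ≤ t :=
      ⟨a (k+1) / (1 + a (k+1)), div_mul_cancel₀ _ (ne_of_gt h1x),
        div_nonneg hx0 h1x.le⟩
    have hkey : (t + (1+t) * a (k+3))/2 ≤ a (k+3) := by
      apply key
      intro b hB0 hBb
      rw [← heq]
      rcases le_total b t with h | h
      · have m1 := le_max_right b ((1-b) * a (k+1))
        have m2 := le_max_right b ((1+b) * a (k+3))
        nlinarith [mul_nonneg (sub_nonneg.mpr h) (show (0:ℝ) ≤ a (k+1) - a (k+3) by linarith)]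
      · have m1 := le_max_left b ((1-b) * a (k+1))
        have m2 := le_max_right b ((1+b) * a (k+3))
        nlinarith [mul_nonneg (sub_nonneg.mpr h) hc0]
    have ht2 : t * (1 + a (k+1)) * a (k+3) = a (k+1) * a (k+3) := by rw [ht]
    nlinarith [ht, ht2, hkey, hc0, hlt]
  -- Get N with bbar small beyond it
  obtain ⟨N0, hN0⟩ := Metric.tendsto_atTop.mp hlim (1/5) (by norm_num)
  have hsmall : ∀ l, N0 + 3 ≤ l → bbar l ≤ 1/5 := by
    intro l hl
    have := hN0 l (by omega)
    rw [Real.dist_eq, sub_zero, abs_of_nonneg (hbbar l (by omega)).1] at this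
    linarith
  -- quantitative growth beyond N0+3
  have hgrow : ∀ k : ℕ, N0 + 3 ≤ k + 3 →
      2/3 * (a (k+1) - a (k+3)) ≤ a (k+3) - a (k+4) := by
    intro k hk
    have hm1 : a (k+2) ≤ a (k+1) := by
      have := mono' (k+1) (by omega); simpa [show k+1+1 = k+2 by omega] using this
    have hm2 : a (k+3) ≤ a (k+2) := by
      have := mono' (k+2) (by omega); simpa [show k+2+1 = k+3 by omega] using this
    have hm3 : a (k+4) ≤ a (k+3) := by
      have := mono' (k+3) (by omega); simpa [show k+3+1 = k+4 by omega] using this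
    have hs : 0 ≤ a (k+1) - a (k+3) := by linarith
    have h := lemB k hs
    obtain ⟨hb0, hb1⟩ := hbbar (k+3) (by omega)
    have hsm := hsmall (k+3) hk
    nlinarith [mul_nonneg (show (0:ℝ) ≤ 1/5 - bbar (k+3) by linarith) (show (0:ℝ) ≤ a (k+3) - a (k+4) by linarith),
      mul_nonneg (show (0:ℝ) ≤ 1/5 - bbar (k+3) by linarith) hs]
  -- Seed: some strict decrease in the tail
  have seed : ∃ k0 : ℕ, N0 + 3 ≤ k0 + 3 ∧ 0 < a (k0+1) - a (k0+3) := by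
    by_cases hcase : ∃ k, N0 + 3 ≤ k ∧ a (k+1) < a k
    · obtain ⟨k, hk, hdk⟩ := hcase
      obtain ⟨p, rfl⟩ : ∃ p, k = p + 1 := ⟨k - 1, by omega⟩
      refine ⟨p, by omega, ?_⟩
      have hm2 : a (p+3) ≤ a (p+2) := by
        have := mono' (p+2) (by omega); simpa [show p+2+1 = p+3 by omega] using this
      have hdk' : a (p+2) < a (p+1) := by
        simpa [show p+1+1 = p+2 by omega] using hdk
      linarith
    · exfalso
      push_neg at hcase
      have hj2 : 2 ≤ Nat.findGreatest (fun m => a (m+1) < a m) (N0+3) :=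
        Nat.le_findGreatest (by omega) (by show a 3 < a 2; linarith)
      have hjN : Nat.findGreatest (fun m => a (m+1) < a m) (N0+3) ≤ N0+3 :=
        Nat.findGreatest_le _
      have hPj : a (Nat.findGreatest (fun m => a (m+1) < a m) (N0+3) + 1) <
          a (Nat.findGreatest (fun m => a (m+1) < a m) (N0+3)) :=
        Nat.findGreatest_spec (P := fun m => a (m+1) < a m) (m := 2) (n := N0+3)
          (by omega) (by show a 3 < a 2; linarith)
      set j := Nat.findGreatest (fun m => a (m+1) < a m) (N0+3) with hjdef
      have hflat : ∀ m, j < m → a (m+1) = a m := by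
        intro m hm
        have hmono := mono' m (by omega)
        by_cases hmN : m ≤ N0 + 3
        · have hng := Nat.findGreatest_is_greatest hm hmN
          have : a m ≤ a (m+1) := not_lt.mp hng
          linarith
        · exact le_antisymm hmono (hcase m (by omega))
      obtain ⟨p, hp⟩ : ∃ p, j = p + 2 := ⟨j - 2, by omega⟩
      apply lemC (p+1)
      · have e1 : a (p+4) = a (p+3) := by
          have := hflat (p+3) (by omega); simpa [show p+3+1 = p+4 by omega] using this
        have hPj' : a (p+3) < a (p+2) := by
          rw [hp] at hPj; simpa [show p+2+1 = p+3 by omega] using hPj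
        simp only [show p+1+3 = p+4 by omega, show p+1+1 = p+2 by omega]
        linarith
      · have e1 : a (p+4) = a (p+3) := by
          have := hflat (p+3) (by omega); simpa [show p+3+1 = p+4 by omega] using this
        have e2 : a (p+5) = a (p+4) := by
          have := hflat (p+4) (by omega); simpa [show p+4+1 = p+5 by omega] using this
        simp only [show p+1+3 = p+4 by omega, show p+1+4 = p+5 by omega]
        linarith
  obtain ⟨k0, hk0N, hs0⟩ := seed
  -- first two positive decrements
  have hd3 : 0 < a (k0+3) - a (k0+4) := by
    have := hgrow k0 hk0N
    linarith
  have hd4 : 0 < a (k0+4) - a (k0+5) := by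
    have h := hgrow (k0+1) (by omega)
    simp only [show k0+1+1 = k0+2 by omega, show k0+1+3 = k0+4 by omega,
      show k0+1+4 = k0+5 by omega] at h
    have hm2 : a (k0+3) ≤ a (k0+2) := by
      have := mono' (k0+2) (by omega); simpa [show k0+2+1 = k0+3 by omega] using this
    linarith
  set m := min (a (k0+3) - a (k0+4)) (a (k0+4) - a (k0+5)) with hmdef
  have hm : 0 < m := lt_min hd3 hd4
  have claim : ∀ i : ℕ, m ≤ a (k0+i+3) - a (k0+i+4) ∧ m ≤ a (k0+i+4) - a (k0+i+5) := by
    intro i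
    induction i with
    | zero =>
      constructor
      · simp only [show k0+0+3 = k0+3 by omega, show k0+0+4 = k0+4 by omega]
        exact min_le_left _ _
      · simp only [show k0+0+4 = k0+4 by omega, show k0+0+5 = k0+5 by omega]
        exact min_le_right _ _
    | succ i ih =>
      constructor
      · simp only [show k0+(i+1)+3 = k0+i+4 by omega, show k0+(i+1)+4 = k0+i+5 by omega]
        exact ih.2
      · simp only [show k0+(i+1)+4 = k0+i+5 by omega, show k0+(i+1)+5 = k0+i+6 by omega]
        have h := hgrow (k0+i+2) (by omega)
        simp only [show k0+i+2+1 = k0+i+3 by omega, show k0+i+2+3 = k0+i+5 by omega,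
          show k0+i+2+4 = k0+i+6 by omega] at h
        have := ih.1; have := ih.2
        linarith
  have hsum : ∀ i : ℕ, a (k0+i+3) ≤ a (k0+3) - i * m := by
    intro i
    induction i with
    | zero => simp
    | succ i ih =>
      have h := (claim i).1
      have : a (k0+(i+1)+3) = a (k0+i+4) := by norm_num [show k0+(i+1)+3 = k0+i+4 by omega]
      rw [this]
      push_cast
      nlinarith
  obtain ⟨n, hn⟩ := exists_nat_gt (a (k0+3) / m)
  rw [div_lt_iff₀ hm] at hn
  have h3 := hsum n
  have h4 := ha (k0+n+3) (by omega)
  linarith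
end

section
/- Let 0 < r < 1 satisfy r + r² > 1 and let l_0 ≥ 2 be an integer. Then there is no strictly decreasing sequence (a_l)_{l=1}^∞ of nonnegative real numbers satisfying a_l − a_{l+1} ≥ r·(a_{l−2} − a_l) for every l > l_0. -/
/-- Let `0 < r < 1` with `r + r² > 1` and let `l₀ ≥ 2` be an integer.  Then there is no
strictly decreasing sequence `(a l)_{l ≥ 1}` of nonnegative reals satisfying
`a l - a (l+1) ≥ r · (a (l-2) - a l)` for every `l > l₀`. -/
theorem no_strictly_decreasing_sequence_with_geometric_gaps (r : ℝ)
    (hr0 : 0 < r) (hr1 : r < 1) (hr : 1 < r + r ^ 2) (l₀ : ℕ) (hl₀ : 2 ≤ l₀) :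
    ¬ ∃ a : ℕ → ℝ, (∀ l, 1 ≤ l → 0 ≤ a l) ∧ (∀ l, 1 ≤ l → a (l + 1) < a l) ∧
      ∀ l : ℕ, l₀ < l → r * (a (l - 2) - a l) ≤ a l - a (l + 1) := by
  rintro ⟨a, hpos, hdec, hrec⟩
  have hmono : ∀ i j, 1 ≤ i → i ≤ j → a j ≤ a i := by
    intro i j hi hij
    induction j, hij using Nat.le_induction with
    | base => exact le_rfl
    | succ n hn ih => exact le_trans (hdec n (le_trans hi hn)).le ih
  set b : ℕ → ℝ := fun l => a (l - 2) - a l with hb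
  have hb0 : ∀ l, 3 ≤ l → 0 ≤ b l := fun l hl =>
    sub_nonneg.2 (hmono (l - 2) l (by omega) (by omega))
  have hbub : ∀ l, 3 ≤ l → b l ≤ a 1 := by
    intro l hl
    have h1 : a (l - 2) ≤ a 1 := hmono 1 (l - 2) le_rfl (by omega)
    have h2 : 0 ≤ a l := hpos l (by omega)
    simp only [hb]
    linarith
  have hstep : ∀ l, l₀ + 2 ≤ l → r * (b (l - 1) + b l) ≤ b (l + 1) := by
    intro l hl
    have h1 := hrec (l - 1) (by omega)
    have h2 := hrec l (by omega)
    have e1 : l - 1 + 1 = l := by omega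
    have e2 : l + 1 - 2 = l - 1 := by omega
    rw [e1] at h1
    simp only [hb, e2]
    linarith
  have h2step : ∀ l, l₀ + 2 ≤ l → (r + r ^ 2) * b l ≤ b (l + 2) := by
    intro l hl
    have h1 := hstep (l + 1) (by omega)
    have e1 : l + 1 - 1 = l := by omega
    rw [e1] at h1
    have h2 := hstep l hl
    have h3 : 0 ≤ b (l - 1) := hb0 (l - 1) (by omega)
    have h4 : 0 ≤ b l := hb0 l (by omega)
    have e2 : l + 1 + 1 = l + 2 := by omega
    rw [e2] at h1
    nlinarith
  have hgeo : ∀ k : ℕ, (r + r ^ 2) ^ k * b (l₀ + 2) ≤ b (l₀ + 2 + 2 * k) := by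
    intro k
    induction k with
    | zero => simpa using le_rfl
    | succ n ih =>
      have h1 := h2step (l₀ + 2 + 2 * n) (by omega)
      have e : l₀ + 2 + 2 * n + 2 = l₀ + 2 + 2 * (n + 1) := by omega
      rw [e] at h1
      have hs : 0 < r + r ^ 2 := by nlinarith
      calc (r + r ^ 2) ^ (n + 1) * b (l₀ + 2)
          = (r + r ^ 2) * ((r + r ^ 2) ^ n * b (l₀ + 2)) := by ring
        _ ≤ (r + r ^ 2) * b (l₀ + 2 + 2 * n) := by nlinarith
        _ ≤ b (l₀ + 2 + 2 * (n + 1)) := h1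
  have hbpos : 0 < b (l₀ + 2) := by
    have e : l₀ + 2 - 2 = l₀ := by omega
    have h1 := hdec l₀ (by omega)
    have h2 := hdec (l₀ + 1) (by omega)
    simp only [hb, e]
    linarith
  obtain ⟨n, hn⟩ := pow_unbounded_of_one_lt (a 1 / b (l₀ + 2)) hr
  have h1 := hgeo n
  have h2 := hbub (l₀ + 2 + 2 * n) (by omega)
  have h3 : a 1 < (r + r ^ 2) ^ n * b (l₀ + 2) := by
    rw [div_lt_iff₀ hbpos] at hn
    linarith
  linarith
end

section
/- Let (a_1,...,a_l) be a good list with l ≥ 2. Then the list (a_1,...,a_l, a_1 + a_l) obtained by appending a_1 + a_l is good, and the list (a_2,...,a_{l−1}) obtained by deleting the first and last entries is good (for l = 2 the resulting empty list is vacuously good). -/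
/-- `GoodList l a` says that the finite list `(a 1, …, a l)` is *good*: all entries are
positive, the list is non-decreasing, and its consecutive differences are non-decreasing
and bounded by the first entry `a 1`.  (The empty list, `l = 0`, is vacuously good.) -/
def GoodList (l : ℕ) (a : ℕ → ℝ) : Prop :=
  (∀ i, 1 ≤ i → i ≤ l → 0 < a i) ∧
  (∀ i, 1 ≤ i → i + 1 ≤ l → a i ≤ a (i + 1)) ∧
  (∀ i, 1 ≤ i → i + 2 ≤ l → a (i + 1) - a i ≤ a (i + 2) - a (i + 1)) ∧
  (∀ i, 1 ≤ i → i + 1 ≤ l → a (i + 1) - a i ≤ a 1)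

/-- If `(a 1, …, a l)` is a good list with `l ≥ 2`, then the list
`(a 1, …, a l, a 1 + a l)` obtained by appending `a 1 + a l` is good, and the list
`(a 2, …, a (l-1))` obtained by deleting the first and last entries is good (for `l = 2`
the resulting empty list is vacuously good). -/
theorem goodList_step (l : ℕ) (hl : 2 ≤ l) (a : ℕ → ℝ) (h : GoodList l a) :
    GoodList (l + 1) (fun i => if i = l + 1 then a 1 + a l else a i) ∧
    GoodList (l - 2) (fun i => a (i + 1)) := by
  obtain ⟨hpos, hmono, hconv, hbd⟩ := h
  constructor
  · refine ⟨?_, ?_, ?_, ?_⟩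
    · intro i hi hil
      by_cases hc : i = l + 1
      · simp only [hc, if_pos rfl, eq_self_iff_true, if_true]
        have := hpos 1 le_rfl (by omega)
        have := hpos l (by omega) le_rfl
        linarith
      · simp only [if_neg hc]
        exact hpos i hi (by omega)
    · intro i hi hil
      by_cases hc : i + 1 = l + 1
      · have hi' : i = l := by omega
        simp only [if_pos hc, hi', eq_self_iff_true, if_true,
          if_neg (by omega : l ≠ l + 1)]
        have := hpos 1 le_rfl (by omega)
        linarith
      · simp only [if_neg hc, if_neg (by omega : i ≠ l + 1)]
        exact hmono i hi (by omega)
    · intro i hi hil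
      by_cases hc : i + 2 = l + 1
      · have hi' : i + 1 = l := by omega
        simp only [if_pos hc, if_neg (by omega : i + 1 ≠ l + 1),
          if_neg (by omega : i ≠ l + 1)]
        have hb := hbd i hi (by omega)
        rw [hi'] at *
        linarith
      · simp only [if_neg hc, if_neg (by omega : i + 1 ≠ l + 1),
          if_neg (by omega : i ≠ l + 1)]
        exact hconv i hi (by omega)
    · intro i hi hil
      simp only [if_neg (by omega : (1:ℕ) ≠ l + 1), if_neg (by omega : i ≠ l + 1)]
      by_cases hc : i + 1 = l + 1
      · have hi' : i = l := by omega
        simp only [if_pos hc, hi', eq_self_iff_true, if_true]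
        linarith
      · simp only [if_neg hc]
        exact hbd i hi (by omega)
  · refine ⟨?_, ?_, ?_, ?_⟩
    · intro i hi hil
      exact hpos (i + 1) (by omega) (by omega)
    · intro i hi hil
      exact hmono (i + 1) (by omega) (by omega)
    · intro i hi hil
      have := hconv (i + 1) (by omega) (by omega)
      convert this using 3 <;> omega
    · intro i hi hil
      have h1 := hbd (i + 1) (by omega) (by omega)
      have h2 := hmono 1 le_rfl hl
      simp only
      have : i + 1 + 1 = i + 2 := by omega
      rw [this] at h1
      linarith
end

section
/- Let (a_1,...,a_l) be a good list. Then a_l ≤ a_{l−k} + k·a_1 for every integer 0 ≤ k ≤ l−1, and consequently a_l ≤ (1/k)·∑_{j=1}^{l} a_j + ((k+1)/2)·a_1 for every integer 1 ≤ k ≤ l−1. -/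
/-- If `(a 1, …, a l)` is a good list, then `a l ≤ a (l - k) + k · a 1` for every integer
`0 ≤ k ≤ l - 1`, and consequently
`a l ≤ (1/k) · ∑_{j=1}^{l} a j + ((k+1)/2) · a 1` for every integer `1 ≤ k ≤ l - 1`. -/
theorem goodList_last_bounds (l : ℕ) (a : ℕ → ℝ) (h : GoodList l a) :
    (∀ k : ℕ, k ≤ l - 1 → a l ≤ a (l - k) + (k : ℝ) * a 1) ∧
    (∀ k : ℕ, 1 ≤ k → k ≤ l - 1 →
      a l ≤ (1 / (k : ℝ)) * (∑ j ∈ Finset.Icc 1 l, a j) + (((k : ℝ) + 1) / 2) * a 1) := by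
  obtain ⟨hpos, hmono, hconv, hdiff⟩ := h
  have part1 : ∀ k : ℕ, k ≤ l - 1 → a l ≤ a (l - k) + (k : ℝ) * a 1 := by
    intro k
    induction k with
    | zero => intro _; simp
    | succ n ih =>
      intro hk
      have hl : n + 2 ≤ l := by omega
      have h1 : a (l - (n + 1) + 1) - a (l - (n + 1)) ≤ a 1 :=
        hdiff (l - (n + 1)) (by omega) (by omega)
      have he : l - (n + 1) + 1 = l - n := by omega
      rw [he] at h1
      have h2 := ih (by omega)
      push_cast
      linarith
  refine ⟨part1, ?_⟩
  intro k hk1 hk2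
  have hl2 : k + 1 ≤ l := by omega
  have hk0 : (0:ℝ) < (k:ℝ) := by exact_mod_cast hk1
  have key : (k:ℝ) * a l ≤ ∑ i ∈ Finset.range k, (a (l - i) + (i:ℝ) * a 1) := by
    have := Finset.sum_le_sum
      (fun i (hi : i ∈ Finset.range k) => part1 i (by
        have := Finset.mem_range.mp hi; omega))
    simpa [Finset.sum_const, mul_comm] using this
  rw [Finset.sum_add_distrib] at key
  have hgauss : ∑ i ∈ Finset.range k, (i:ℝ) = (k:ℝ) * ((k:ℝ) - 1) / 2 := by
    have h2 : ((∑ i ∈ Finset.range k, i : ℕ) : ℝ) * 2 = (k:ℝ) * ((k:ℝ) - 1) := by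
      have := Finset.sum_range_id_mul_two k
      have hc : (((∑ i ∈ Finset.range k, i) * 2 : ℕ) : ℝ) = ((k * (k - 1) : ℕ) : ℝ) := by
        exact_mod_cast congrArg (Nat.cast : ℕ → ℝ) this
      push_cast [Nat.cast_sub hk1] at hc
      push_cast
      linarith
    push_cast at h2 ⊢
    linarith
  have hsum2 : ∑ i ∈ Finset.range k, (i:ℝ) * a 1
      = ((k:ℝ) * ((k:ℝ) - 1) / 2) * a 1 := by
    rw [← Finset.sum_mul, hgauss]
  have hinj : ∀ x ∈ Finset.range k, ∀ y ∈ Finset.range k, l - x = l - y → x = y := by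
    intro x hx y hy hxy
    have := Finset.mem_range.mp hx
    have := Finset.mem_range.mp hy
    omega
  have himg : ∑ i ∈ Finset.range k, a (l - i)
      = ∑ j ∈ Finset.image (fun i => l - i) (Finset.range k), a j :=
    (Finset.sum_image hinj).symm
  have hsub : Finset.image (fun i => l - i) (Finset.range k) ⊆ Finset.Icc 1 l := by
    intro j hj
    obtain ⟨i, hi, rfl⟩ := Finset.mem_image.mp hj
    have := Finset.mem_range.mp hi
    exact Finset.mem_Icc.mpr ⟨by omega, by omega⟩
  have hle : ∑ i ∈ Finset.range k, a (l - i) ≤ ∑ j ∈ Finset.Icc 1 l, a j := by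
    rw [himg]
    refine Finset.sum_le_sum_of_subset_of_nonneg hsub ?_
    intro j hj _
    have := Finset.mem_Icc.mp hj
    exact le_of_lt (hpos j this.1 this.2)
  have ha1 : 0 < a 1 := hpos 1 le_rfl (by omega)
  have hk2' : (k:ℝ) * a l ≤ (∑ j ∈ Finset.Icc 1 l, a j) + ((k:ℝ) * ((k:ℝ) - 1) / 2) * a 1 := by
    rw [hsum2] at key; linarith
  have : a l ≤ ((∑ j ∈ Finset.Icc 1 l, a j) + ((k:ℝ) * ((k:ℝ) - 1) / 2) * a 1) / (k:ℝ) := by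
    rw [le_div_iff₀ hk0]; linarith
  have hkk : ((k:ℝ) - 1) / 2 ≤ ((k:ℝ) + 1) / 2 := by linarith
  calc a l ≤ ((∑ j ∈ Finset.Icc 1 l, a j) + ((k:ℝ) * ((k:ℝ) - 1) / 2) * a 1) / (k:ℝ) := this
    _ = (1 / (k:ℝ)) * (∑ j ∈ Finset.Icc 1 l, a j) + (((k:ℝ) - 1) / 2) * a 1 := by
        field_simp
    _ ≤ (1 / (k:ℝ)) * (∑ j ∈ Finset.Icc 1 l, a j) + (((k:ℝ) + 1) / 2) * a 1 := by
        nlinarith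
end

section
/- Let (a_1,...,a_l) be a good list with l ≥ 2. Then (a_1 + a_l) / (∑_{j=1}^{l} a_j) ≤ √(2/l) + 2/l. -/
set_option maxHeartbeats 1000000 in
/-- If `(a 1, …, a l)` is a good list with `l ≥ 2`, then the Labouchère betting
proportion satisfies `(a 1 + a l) / (∑_{j=1}^{l} a j) ≤ √(2/l) + 2/l`. -/
theorem goodList_bet_proportion (l : ℕ) (hl : 2 ≤ l) (a : ℕ → ℝ) (h : GoodList l a) :
    (a 1 + a l) / (∑ j ∈ Finset.Icc 1 l, a j) ≤ Real.sqrt (2 / (l : ℝ)) + 2 / (l : ℝ) := by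
  obtain ⟨hpos, hmono, _, hdiff⟩ := h
  have ha1 : 0 < a 1 := hpos 1 le_rfl (by omega)
  -- monotonicity
  have M : ∀ k j, 1 ≤ j → j + k ≤ l → a j ≤ a (j + k) := by
    intro k
    induction k with
    | zero => intro j _ _; simp
    | succ n ih =>
      intro j hj hjk
      have h1 := ih j hj (by omega)
      have h2 := hmono (j + n) (by omega) (by omega)
      calc a j ≤ a (j + n) := h1
        _ ≤ a (j + n + 1) := h2
        _ = a (j + (n+1)) := by ring_nf
  -- bounded growth
  have L1 : ∀ k j, 1 ≤ j → j + k ≤ l → a (j + k) ≤ a j + k * a 1 := by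
    intro k
    induction k with
    | zero => intro j _ _; simp
    | succ n ih =>
      intro j hj hjk
      have h1 := ih j hj (by omega)
      have h2 := hdiff (j + n) (by omega) (by omega)
      have : a (j + (n+1)) = a (j + n + 1) := by ring_nf
      push_cast
      rw [this]
      nlinarith
  set S := ∑ j ∈ Finset.Icc 1 l, a j with hS
  have hSpos : 0 < S := by
    apply Finset.sum_pos
    · intro i hi
      simp only [Finset.mem_Icc] at hi
      exact hpos i hi.1 hi.2
    · exact ⟨1, by simp; omega⟩
  set b := a l with hb
  have hab : a 1 ≤ b := by
    have := M (l - 1) 1 le_rfl (by omega)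
    simpa [show 1 + (l-1) = l by omega] using this
  have hbl : b ≤ (l : ℝ) * a 1 := by
    have := L1 (l - 1) 1 le_rfl (by omega)
    rw [show 1 + (l-1) = l by omega] at this
    have hc : ((l - 1 : ℕ) : ℝ) = (l : ℝ) - 1 := by
      push_cast [Nat.cast_sub (by omega : 1 ≤ l)]; ring
    rw [hc] at this
    nlinarith
  -- the auxiliary sequence
  set q : ℕ → ℝ := fun j => max 0 (b - a 1 - ((l : ℝ) - j) * a 1) with hq
  have hq0 : q 0 = 0 := by
    simp only [hq]
    apply max_eq_left
    push_cast
    nlinarith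
  have hql : q l = b - a 1 := by
    simp only [hq]
    rw [sub_self, zero_mul, sub_zero]
    exact max_eq_right (by linarith)
  -- pointwise bound
  have hpt : ∀ i ∈ Finset.range l, 2 * a 1 ^ 2 + (q (i+1) ^ 2 - q i ^ 2) ≤ 2 * a 1 * a (i+1) := by
    intro i hi
    simp only [Finset.mem_range] at hi
    have hM := M i 1 le_rfl (by omega)
    have hL := L1 (l - (i+1)) (i+1) (by omega) (by omega)
    rw [show (i+1) + (l - (i+1)) = l by omega] at hL
    have hc : ((l - (i+1) : ℕ) : ℝ) = (l : ℝ) - (i+1) := by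
      push_cast [Nat.cast_sub (by omega : i+1 ≤ l)]; ring
    rw [hc] at hL
    have ha1i : a 1 ≤ a (i+1) := by simpa [add_comm] using hM
    set p := q (i+1) with hp
    set r := q i with hr
    have hr0 : 0 ≤ r := le_max_left _ _
    have hp0 : 0 ≤ p := le_max_left _ _
    have hrp : r ≤ p := by
      rw [hr, hp]
      simp only [hq]
      apply max_le_max le_rfl
      push_cast; nlinarith
    have hpr : p ≤ r + a 1 := by
      rw [hr, hp]
      simp only [hq]
      apply max_le (by positivity)
      have h2 : b - a 1 - ((l:ℝ) - i) * a 1 ≤ max 0 (b - a 1 - ((l:ℝ) - i) * a 1) :=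
        le_max_right _ _
      push_cast
      push_cast at h2
      nlinarith
    have hpa : p ≤ a (i+1) - a 1 := by
      rw [hp]
      simp only [hq]
      apply max_le (by linarith)
      push_cast
      nlinarith
    nlinarith [mul_nonneg (sub_nonneg.mpr hrp) (by linarith : (0:ℝ) ≤ p + r),
      mul_nonneg (sub_nonneg.mpr hpr) (by linarith : (0:ℝ) ≤ p + r)]
  -- sum over range
  have hSr : S = ∑ i ∈ Finset.range l, a (i+1) := by
    rw [hS, show Finset.Icc 1 l = Finset.Ico 1 (l+1) from (Finset.Ico_add_one_right_eq_Icc ..).symm,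
      Finset.sum_Ico_eq_sum_range]
    simp [add_comm]
  have tele : ∑ i ∈ Finset.range l, (q (i+1) ^ 2 - q i ^ 2) = q l ^ 2 - q 0 ^ 2 :=
    Finset.sum_range_sub (fun i => q i ^ 2) l
  have hkey : 2 * (l:ℝ) * a 1 ^ 2 + (b - a 1) ^ 2 ≤ 2 * a 1 * S := by
    have h1 : ∑ i ∈ Finset.range l, (2 * a 1 ^ 2 + (q (i+1) ^ 2 - q i ^ 2))
        ≤ ∑ i ∈ Finset.range l, 2 * a 1 * a (i+1) := Finset.sum_le_sum hpt
    rw [Finset.sum_add_distrib, Finset.sum_const, Finset.card_range, tele, hq0, hql,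
      nsmul_eq_mul] at h1
    rw [hSr, Finset.mul_sum]
    nlinarith [h1]
  -- now the algebra
  set s := Real.sqrt (2 * l) with hsdef
  have hl0 : (0:ℝ) < l := by positivity
  have hs2 : s ^ 2 = 2 * l := Real.sq_sqrt (by positivity)
  have hlR : (2:ℝ) ≤ (l:ℝ) := by exact_mod_cast hl
  have hsge : 2 ≤ s := by nlinarith [Real.sqrt_nonneg (2 * (l:ℝ)), hs2, hlR]
  have hsq : Real.sqrt (2 / (l:ℝ)) = s / l := by
    rw [show (2:ℝ)/(l:ℝ) = (s/l)^2 by rw [div_pow, hs2]; field_simp]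
    exact Real.sqrt_sq (by positivity)
  rw [hsq, ← add_div, div_le_div_iff₀ hSpos hl0]
  -- goal : (a 1 + b) * l ≤ (s + 2) * S
  have hlval : (l:ℝ) = s^2/2 := by linarith
  have hquad : (a 1 + b) * l * (2 * a 1) ≤ (s + 2) * (2 * l * a 1 ^ 2 + (b - a 1) ^ 2) := by
    have hid : 4*(s+2)*((s + 2) * (2 * (l:ℝ) * a 1 ^ 2 + (b - a 1) ^ 2)
        - (a 1 + b) * l * (2 * a 1))
        = (2*(s+2)*b - (s^2 + 2*s + 4) * a 1)^2 + (3*s^4 + 8*s^3) * a 1 ^ 2 := by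
      linear_combination (-(2*(s+2)*(2*(s+2)*(a 1)^2 - 2*(a 1)*(a 1 + b)))) * hs2
    have hs0 : (0:ℝ) ≤ s := by linarith
    have h3 : (0:ℝ) ≤ (3*s^4 + 8*s^3) * a 1 ^ 2 :=
      mul_nonneg (by nlinarith [pow_nonneg hs0 3, pow_nonneg hs0 4]) (sq_nonneg _)
    have hD : 0 ≤ 4*(s+2)*((s + 2) * (2 * (l:ℝ) * a 1 ^ 2 + (b - a 1) ^ 2)
        - (a 1 + b) * l * (2 * a 1)) := by
      rw [hid]; exact add_nonneg (sq_nonneg _) h3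
    have h4 : (0:ℝ) < 4*(s+2) := by linarith
    have := (mul_nonneg_iff_of_pos_left h4).mp hD
    linarith
  have hmul : (s + 2) * (2 * (l:ℝ) * a 1 ^ 2 + (b - a 1) ^ 2) ≤ (s + 2) * (2 * a 1 * S) := by
    apply mul_le_mul_of_nonneg_left hkey (by linarith)
  have := le_trans hquad hmul
  nlinarith [this, ha1]
end

section
/- Consider the Labouchère evolution from an initial list L_0 of length l_0 whose smallest entry is a > 0, driven by an arbitrary (deterministic) sequence of win/loss outcomes. Then for every coup n occurring before the list becomes empty, the bet satisfies B_n ≥ a·max(l_{n−1} − l_0, 0), where l_{n−1} is the length of the list before coup n. -/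
open MeasureTheory ProbabilityTheory ENNReal

lemma lab_headI (L : List ℝ) (h : L ≠ []) : L.headI = L[0]'(List.length_pos_iff.mpr h) := by
  cases L with
  | nil => simp at h
  | cons x t => simp

lemma lab_lastD (L : List ℝ) (h : L ≠ []) :
    L.getLastD 0 = L[L.length - 1]'(by simp [Nat.sub_lt (List.length_pos_iff.mpr h)]) := by
  rw [List.getLastD_eq_getLast?, List.getLast?_eq_getLast h, Option.getD_some,
    List.getLast_eq_getElem]

lemma lab_key (L₀ : List ℝ) (a : ℝ) (ha : 0 < a)
    (haMem : a ∈ L₀) (haMin : ∀ x ∈ L₀, a ≤ x) (w : ℕ → Bool) :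
    ∀ n i (h : i < (labList L₀ w n).length),
      a * max ((i : ℝ) + 1 - (L₀.length : ℝ)) 1 ≤ (labList L₀ w n)[i] := by
  intro n
  induction n with
  | zero =>
    intro i h
    have h1 : (i : ℝ) + 1 - (L₀.length : ℝ) ≤ 1 := by
      have : (i : ℝ) ≤ (L₀.length : ℝ) := by exact_mod_cast h.le
      linarith
    have := haMin (L₀[i]) (List.getElem_mem h)
    calc a * max ((i : ℝ) + 1 - (L₀.length : ℝ)) 1 = a * 1 := by
          rw [max_eq_right h1]
      _ ≤ L₀[i] := by simpa using this
  | succ n ih =>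
    intro i h
    simp only [labList, labStep] at h ⊢
    by_cases hL : labList L₀ w n = []
    · simp [hL] at h
    · simp only [if_neg hL] at h ⊢
      set L := labList L₀ w n with hLdef
      have hlen : 0 < L.length := List.length_pos_iff.mpr hL
      by_cases hw : w (n + 1) = true
      · simp only [if_pos hw] at h ⊢
        have h' : i + 1 < L.length := by simp at h; omega
        rw [List.getElem_dropLast, List.getElem_tail]
        calc a * max ((i : ℝ) + 1 - (L₀.length : ℝ)) 1
            ≤ a * max (((i + 1 : ℕ) : ℝ) + 1 - (L₀.length : ℝ)) 1 := by
              apply mul_le_mul_of_nonneg_left _ ha.le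
              apply max_le_max _ le_rfl
              push_cast; linarith
          _ ≤ L[i + 1] := ih (i + 1) h'
      · simp only [if_neg hw] at h ⊢
        rcases lt_or_eq_of_le (Nat.lt_succ_iff.mp (by simpa using h)) with hi | hi
        · rw [List.getElem_append_left hi]
          exact ih i hi
        · subst hi
          rw [List.getElem_concat_length (by rw [hLdef])]
          show a * max ((L.length : ℝ) + 1 - (L₀.length : ℝ)) 1 ≤ labBet L
          have hl0 : (1 : ℝ) ≤ (L₀.length : ℝ) := by
            exact_mod_cast List.length_pos_iff.mpr (List.ne_nil_of_mem haMem)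
          have hb0 := ih 0 hlen
          have hbl := ih (L.length - 1) (Nat.sub_lt hlen one_pos)
          rw [← lab_headI L hL] at hb0
          have ha0 : a ≤ L.headI := by
            calc a = a * 1 := (mul_one a).symm
              _ ≤ a * max ((0 : ℕ) + 1 - (L₀.length : ℝ)) 1 :=
                mul_le_mul_of_nonneg_left (le_max_right _ _) ha.le
              _ ≤ _ := hb0
          unfold labBet
          by_cases h1 : L.length = 1
          · rw [if_pos h1]
            have h2 : max ((L.length : ℝ) + 1 - (L₀.length : ℝ)) 1 = 1 :=
              max_eq_right (by rw [h1]; push_cast; linarith)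
            rw [h2, mul_one]; exact ha0
          · rw [if_neg h1, lab_lastD L hL]
            have hcast : ((L.length - 1 : ℕ) : ℝ) + 1 = (L.length : ℝ) := by
              push_cast [Nat.cast_sub hlen]; ring
            rw [hcast] at hbl
            have hmax : max ((L.length : ℝ) + 1 - (L₀.length : ℝ)) 1
                ≤ max ((L.length : ℝ) - (L₀.length : ℝ)) 1 + 1 := by
              rcases le_or_gt ((L.length : ℝ) + 1 - (L₀.length : ℝ)) 1 with hc | hc
              · have := le_max_right ((L.length : ℝ) - (L₀.length : ℝ)) (1 : ℝ)
                rw [max_eq_right hc]; linarith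
              · have := le_max_left ((L.length : ℝ) - (L₀.length : ℝ)) (1 : ℝ)
                rw [max_eq_left hc.le]; linarith
            calc a * max ((L.length : ℝ) + 1 - (L₀.length : ℝ)) 1
                ≤ a * (max ((L.length : ℝ) - (L₀.length : ℝ)) 1 + 1) :=
                  mul_le_mul_of_nonneg_left hmax ha.le
              _ = a + a * max ((L.length : ℝ) - (L₀.length : ℝ)) 1 := by ring
              _ ≤ L.headI + L[L.length - 1]'(Nat.sub_lt hlen one_pos) :=
                  add_le_add ha0 hbl

/-- Deterministic Labouchère evolution: from an initial list `L₀` whose smallest entry is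
`a > 0`, driven by an arbitrary sequence of win/loss outcomes, the bet at any coup taking
place while the list is nonempty is at least `a · max (l - l₀) 0`, where `l` is the
current list length and `l₀` the initial length.  (The list before coup `n + 1` is
`labList L₀ w n`.) -/
theorem labouchere_bet_lower_bound (L₀ : List ℝ) (a : ℝ) (ha : 0 < a)
    (haMem : a ∈ L₀) (haMin : ∀ x ∈ L₀, a ≤ x) (w : ℕ → Bool) :
    ∀ n : ℕ, labList L₀ w n ≠ [] →
      a * max (((labList L₀ w n).length : ℝ) - (L₀.length : ℝ)) 0 ≤
        labBet (labList L₀ w n) := by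
  intro n hne
  set L := labList L₀ w n with hLdef
  have hlen : 0 < L.length := List.length_pos_iff.mpr hne
  have hl0 : (1 : ℝ) ≤ (L₀.length : ℝ) := by
    exact_mod_cast List.length_pos_iff.mpr (List.ne_nil_of_mem haMem)
  have key := lab_key L₀ a ha haMem haMin w n
  rw [← hLdef] at key
  have hb0 := key 0 hlen
  rw [← lab_headI L hne] at hb0
  have ha0 : a ≤ L.headI := by
    calc a = a * 1 := (mul_one a).symm
      _ ≤ a * max ((0 : ℕ) + 1 - (L₀.length : ℝ)) 1 :=
        mul_le_mul_of_nonneg_left (le_max_right _ _) ha.le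
      _ ≤ _ := hb0
  unfold labBet
  by_cases h1 : L.length = 1
  · rw [if_pos h1]
    have h2 : max ((L.length : ℝ) - (L₀.length : ℝ)) 0 ≤ 1 := by
      rw [h1]; push_cast
      exact max_le (by linarith) zero_le_one
    calc a * max ((L.length : ℝ) - (L₀.length : ℝ)) 0 ≤ a * 1 :=
        mul_le_mul_of_nonneg_left h2 ha.le
      _ = a := mul_one a
      _ ≤ L.headI := ha0
  · rw [if_neg h1, lab_lastD L hne]
    have hbl := key (L.length - 1) (Nat.sub_lt hlen one_pos)
    have hcast : ((L.length - 1 : ℕ) : ℝ) + 1 = (L.length : ℝ) := by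
      push_cast [Nat.cast_sub hlen]; ring
    rw [hcast] at hbl
    have hmax : max ((L.length : ℝ) - (L₀.length : ℝ)) 0
        ≤ max ((L.length : ℝ) - (L₀.length : ℝ)) 1 :=
      max_le_max le_rfl zero_le_one
    calc a * max ((L.length : ℝ) - (L₀.length : ℝ)) 0
        ≤ a * max ((L.length : ℝ) - (L₀.length : ℝ)) 1 :=
          mul_le_mul_of_nonneg_left hmax ha.le
      _ ≤ L[L.length - 1]'(Nat.sub_lt hlen one_pos) := hbl
      _ ≤ L.headI + L[L.length - 1]'(Nat.sub_lt hlen one_pos) := by linarith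
end
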